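/- arXiv:1210.0365 — 5 statements merged into one kernel-verified Lean document; each statement's English description precedes it below -/
import Mathlib

section
/- Let Ω > 0 and ω ∈ ℝ. Then lim_{t→∞} e^{−iωt} · (1/√π) ∫₀^t e^{−Ω(t−τ)} (t−τ)^{−1/2} (Ω + iω) e^{iωτ} dτ = (Ω + iω)^{1/2}, where (Ω + iω)^{1/2} is the principal complex square root. In other words, the shifted order-1/2 fractional derivative (D + Ω)^{1/2} applied to the time-harmonic signal e^{iωt} is asymptotically, as t → ∞, multiplication by (Ω + iω)^{1/2}. -/
open MeasureTheory Filter Real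

open Set in
private lemma aux_mul_cpow' {r : ℝ} (hr : 0 < r) {z : ℂ} (hz : z ≠ 0) (s : ℂ) :
    ((r : ℂ) * z) ^ s = (r : ℂ) ^ s * z ^ s := by
  have hr' : (r : ℂ) ≠ 0 := Complex.ofReal_ne_zero.mpr hr.ne'
  rw [Complex.cpow_def_of_ne_zero (mul_ne_zero hr' hz), Complex.log_ofReal_mul hr hz,
    add_mul, Complex.exp_add, Complex.cpow_def_of_ne_zero hr', Complex.cpow_def_of_ne_zero hz,
    Complex.ofReal_log hr.le]

open Set in
private lemma aux_alg' {z : ℂ} (hz : 0 < z.re) :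
    z / (Real.sqrt π : ℂ) * ((π : ℂ) / z) ^ (1/2 : ℂ) = z ^ (1/2 : ℂ) := by
  have hz0 : z ≠ 0 := fun h => by rw [h] at hz; simp at hz
  have harg : z.arg ≠ π := ne_of_lt (Complex.arg_lt_pi_iff.mpr (Or.inl hz.le))
  have hsqpos : 0 < Real.sqrt π := Real.sqrt_pos.mpr Real.pi_pos
  have hsq : (Real.sqrt π : ℂ) ≠ 0 := Complex.ofReal_ne_zero.mpr hsqpos.ne'
  have hpihalf : ((π : ℝ) : ℂ) ^ (1/2 : ℂ) = (Real.sqrt π : ℂ) := by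
    rw [show ((1:ℂ)/2) = (((1/2 : ℝ):ℂ)) by norm_num, ← Complex.ofReal_cpow Real.pi_pos.le]
    rw [Real.sqrt_eq_rpow]
  have h1 : ((π : ℂ) / z) ^ (1/2 : ℂ) = (Real.sqrt π : ℂ) * (z ^ (1/2 : ℂ))⁻¹ := by
    rw [div_eq_mul_inv, aux_mul_cpow' Real.pi_pos (inv_ne_zero hz0),
      Complex.inv_cpow _ _ harg, hpihalf]
  have h2 : z ^ (1/2 : ℂ) * z ^ (1/2 : ℂ) = z := by
    rw [← Complex.cpow_add _ _ hz0]; norm_num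
  have h3 : z ^ (1/2 : ℂ) ≠ 0 := by
    rw [Ne, Complex.cpow_eq_zero_iff]; push_neg; intro h; exact absurd h hz0
  rw [h1]
  have key : z * (z ^ (1/2:ℂ))⁻¹ = z ^ (1/2:ℂ) := by
    nth_rewrite 1 [← h2]
    rw [mul_assoc, mul_inv_cancel₀ h3, mul_one]
  rw [div_mul_eq_mul_div, show z * ((Real.sqrt π : ℂ) * (z ^ (1/2:ℂ))⁻¹)
      = (Real.sqrt π : ℂ) * (z * (z ^ (1/2:ℂ))⁻¹) by ring, key,
    mul_comm, mul_div_assoc, div_self hsq, mul_one]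

open Set in
private lemma aux_integrable' {z : ℂ} (hz : 0 < z.re) :
    IntegrableOn (fun x : ℝ => ((x ^ (-(1/2 : ℝ)) : ℝ) : ℂ) * Complex.exp (-(z * x)))
      (Ioi (0:ℝ)) := by
  have hmaj : IntegrableOn (fun x : ℝ => x ^ (-(1/2:ℝ)) * Real.exp (-z.re * x ^ (1:ℝ)))
      (Ioi (0:ℝ)) :=
    integrableOn_rpow_mul_exp_neg_mul_rpow (by norm_num) one_pos hz
  simp only [Real.rpow_one] at hmaj
  refine Integrable.mono' hmaj ?_ ?_
  · apply Measurable.aestronglyMeasurable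
    fun_prop
  · rw [ae_restrict_iff' measurableSet_Ioi]
    filter_upwards with x hx
    rw [mem_Ioi] at hx
    rw [norm_mul, Complex.norm_exp]
    have : (-(z * x)).re = -z.re * x := by simp
    rw [this, Complex.norm_real, Real.norm_eq_abs,
      abs_of_nonneg (Real.rpow_nonneg hx.le _)]

open Set in
private lemma aux_value' {z : ℂ} (hz : 0 < z.re) :
    ∫ x in Ioi (0:ℝ), ((x ^ (-(1/2 : ℝ)) : ℝ) : ℂ) * Complex.exp (-(z * x))
      = ((π : ℂ) / z) ^ (1/2 : ℂ) := by
  have h := integral_comp_rpow_Ioi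
    (fun y : ℝ => ((y ^ (-(1/2 : ℝ)) : ℝ) : ℂ) * Complex.exp (-(z * y))) (p := 2) two_ne_zero
  rw [← h]
  have heq : ∀ x ∈ Ioi (0:ℝ),
      (|(2:ℝ)| * x ^ ((2:ℝ) - 1)) •
        ((((x ^ (2:ℝ)) ^ (-(1/2 : ℝ)) : ℝ) : ℂ) * Complex.exp (-(z * (x ^ (2:ℝ) : ℝ))))
      = 2 * Complex.exp (-z * (x:ℂ) ^ 2) := by
    intro x hx
    rw [mem_Ioi] at hx
    have h1 : (x ^ (2:ℝ)) ^ (-(1/2 : ℝ)) = x⁻¹ := by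
      rw [← Real.rpow_mul hx.le]
      norm_num
      exact Real.rpow_neg_one x
    have h2 : x ^ (2:ℝ) = x ^ (2:ℕ) := by
      rw [← Real.rpow_natCast x 2]; norm_num
    rw [h1, h2, show (2:ℝ) - 1 = 1 by norm_num, Real.rpow_one]
    rw [Complex.real_smul]
    push_cast
    have hx0 : (x:ℂ) ≠ 0 := by exact_mod_cast hx.ne'
    rw [abs_of_nonneg (by norm_num : (0:ℝ) ≤ 2)]
    field_simp
    norm_num
  rw [setIntegral_congr_fun measurableSet_Ioi heq, integral_const_mul,
    integral_gaussian_complex_Ioi hz]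
  ring

open Set in
private lemma aux_rewrite' (Ω ω : ℝ) (t : ℝ) :
    Complex.exp (-(Complex.I * (ω : ℂ) * (t : ℂ))) * ((1 / Real.sqrt π : ℝ) : ℂ) *
        ∫ τ in (0 : ℝ)..t,
          ((Real.exp (-Ω * (t - τ)) * (t - τ) ^ (-(1/2 : ℝ)) : ℝ) : ℂ) *
            (((Ω : ℂ) + (ω : ℂ) * Complex.I) * Complex.exp (Complex.I * (ω : ℂ) * (τ : ℂ)))
    = (((Ω : ℂ) + (ω : ℂ) * Complex.I) / (Real.sqrt π : ℂ)) *
        ∫ u in (0 : ℝ)..t,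
          ((u ^ (-(1/2 : ℝ)) : ℝ) : ℂ) *
            Complex.exp (-((((Ω : ℂ) + (ω : ℂ) * Complex.I)) * u)) := by
  set z : ℂ := (Ω : ℂ) + (ω : ℂ) * Complex.I with hzdef
  have step1 :
      (∫ τ in (0 : ℝ)..t,
          ((Real.exp (-Ω * (t - τ)) * (t - τ) ^ (-(1/2 : ℝ)) : ℝ) : ℂ) *
            (z * Complex.exp (Complex.I * (ω : ℂ) * (τ : ℂ))))
      = ∫ τ in (0 : ℝ)..t,
          (fun s : ℝ => ((Real.exp (-Ω * s) * s ^ (-(1/2 : ℝ)) : ℝ) : ℂ) *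
            (z * Complex.exp (Complex.I * (ω : ℂ) * ((t : ℂ) - (s : ℂ))))) (t - τ) := by
    apply intervalIntegral.integral_congr
    intro τ _
    simp only
    push_cast
    ring_nf
  rw [step1, intervalIntegral.integral_comp_sub_left
    (fun s : ℝ => ((Real.exp (-Ω * s) * s ^ (-(1/2 : ℝ)) : ℝ) : ℂ) *
      (z * Complex.exp (Complex.I * (ω : ℂ) * ((t : ℂ) - (s : ℂ))))) t]
  simp only [sub_self, sub_zero]
  have step2 :
      (∫ u in (0 : ℝ)..t,
          ((Real.exp (-Ω * u) * u ^ (-(1/2 : ℝ)) : ℝ) : ℂ) *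
            (z * Complex.exp (Complex.I * (ω : ℂ) * ((t : ℂ) - (u : ℂ)))))
      = (z * Complex.exp (Complex.I * (ω : ℂ) * (t : ℂ))) *
          ∫ u in (0 : ℝ)..t, ((u ^ (-(1/2 : ℝ)) : ℝ) : ℂ) * Complex.exp (-(z * u)) := by
    rw [← intervalIntegral.integral_const_mul]
    apply intervalIntegral.integral_congr
    intro u _
    have e1 : Complex.exp (Complex.I * (ω:ℂ) * ((t:ℂ) - u)) =
        Complex.exp (Complex.I * (ω:ℂ) * (t:ℂ)) * Complex.exp (-(Complex.I * (ω:ℂ) * u)) := by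
      rw [← Complex.exp_add]; ring_nf
    have e2 : Complex.exp (-(z * u)) =
        Complex.exp (-(Ω:ℂ) * (u:ℂ)) * Complex.exp (-(Complex.I * (ω:ℂ) * u)) := by
      rw [← Complex.exp_add]; congr 1; rw [hzdef]; ring
    beta_reduce
    rw [e1, e2]
    push_cast
    ring
  rw [step2, ← mul_assoc]
  congr 1
  rw [show Complex.exp (-(Complex.I * (ω:ℂ) * (t:ℂ))) * ((1 / Real.sqrt π : ℝ) : ℂ) *
      (z * Complex.exp (Complex.I * (ω:ℂ) * (t:ℂ))) =
      ((1 / Real.sqrt π : ℝ) : ℂ) * z *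
      (Complex.exp (-(Complex.I * (ω:ℂ) * (t:ℂ))) * Complex.exp (Complex.I * (ω:ℂ) * (t:ℂ)))
      by ring, ← Complex.exp_add, neg_add_cancel, Complex.exp_zero, mul_one]
  push_cast
  ring

/-- The shifted order-1/2 fractional derivative `(D+Ω)^{1/2}` of the time-harmonic
signal `e^{iωt}` is asymptotically multiplication by the principal square root
`(Ω+iω)^{1/2}`: `e^{−iωt} (1/√π) ∫₀^t e^{−Ω(t−τ)} (t−τ)^{−1/2} (Ω+iω) e^{iωτ} dτ
→ (Ω+iω)^{1/2}` as `t → ∞`. -/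
theorem shifted_half_derivative_harmonic_limit (Ω ω : ℝ) (hΩ : 0 < Ω) :
    Tendsto
      (fun t : ℝ =>
        Complex.exp (-(Complex.I * (ω : ℂ) * (t : ℂ))) * ((1 / Real.sqrt π : ℝ) : ℂ) *
          ∫ τ in (0 : ℝ)..t,
            ((Real.exp (-Ω * (t - τ)) * (t - τ) ^ (-(1/2 : ℝ)) : ℝ) : ℂ) *
              (((Ω : ℂ) + (ω : ℂ) * Complex.I) * Complex.exp (Complex.I * (ω : ℂ) * (τ : ℂ))))
      atTop
      (nhds (((Ω : ℂ) + (ω : ℂ) * Complex.I) ^ ((1/2 : ℂ)))) := by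
  set z : ℂ := (Ω : ℂ) + (ω : ℂ) * Complex.I with hzdef
  have hzre : 0 < z.re := by simp [hzdef, hΩ]
  have htend : Tendsto
      (fun t : ℝ => ∫ u in (0 : ℝ)..t,
        ((u ^ (-(1/2 : ℝ)) : ℝ) : ℂ) * Complex.exp (-(z * u))) atTop
      (nhds (∫ x in Set.Ioi (0:ℝ), ((x ^ (-(1/2 : ℝ)) : ℝ) : ℂ) * Complex.exp (-(z * x)))) :=
    intervalIntegral_tendsto_integral_Ioi 0 (aux_integrable' hzre) tendsto_id
  rw [aux_value' hzre] at htend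
  have := htend.const_mul (z / (Real.sqrt π : ℂ))
  rw [aux_alg' hzre] at this
  refine this.congr fun t => ?_
  exact (aux_rewrite' Ω ω t).symm
end

section
/- Let λ_f, m, β ∈ ℝ, μ ∈ ℝ, and set λ₀ = λ_f − m β². Assume λ₀ + μ ≠ 0. Let u = (u₁, u₂) : ℝ² → ℝ² be of class C³ and ξ : ℝ² → ℝ of class C². Define the strain ε = (∇u + ∇uᵀ)/2, the stresses σ_{xx} = λ_f(∂u₁/∂x + ∂u₂/∂y) + 2μ ∂u₁/∂x − βmξ, σ_{yy} = λ_f(∂u₁/∂x + ∂u₂/∂y) + 2μ ∂u₂/∂y − βmξ, σ_{xy} = μ(∂u₁/∂y + ∂u₂/∂x), and the pressure p = m(−β(∂u₁/∂x + ∂u₂/∂y) + ξ). Then the Beltrami–Michell equation holds: ∂²σ_{xy}/∂x∂y = θ₀ ∂²σ_{xx}/∂x² + θ₁ ∂²σ_{yy}/∂x² + θ₂ ∂²p/∂x² + θ₁ ∂²σ_{xx}/∂y² + θ₀ ∂²σ_{yy}/∂y² + θ₂ ∂²p/∂y², where θ₀ = −λ₀/(4(λ₀ + μ)), θ₁ =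 (λ₀ + 2μ)/(4(λ₀ + μ)), θ₂ = μβ/(2(λ₀ + μ)). -/
/-- Partial derivative with respect to the first (x) variable. -/
noncomputable def pdx (f : ℝ × ℝ → ℝ) : ℝ × ℝ → ℝ := fun q => fderiv ℝ f q (1, 0)

/-- Partial derivative with respect to the second (y) variable. -/
noncomputable def pdy (f : ℝ × ℝ → ℝ) : ℝ × ℝ → ℝ := fun q => fderiv ℝ f q (0, 1)

/-- Directional partial derivative. -/
noncomputable def pd (v : ℝ × ℝ) (f : ℝ × ℝ → ℝ) : ℝ × ℝ → ℝ := fun q => fderiv ℝ f q v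

lemma contDiff_pd {n m : ℕ∞} (v : ℝ × ℝ) (f : ℝ × ℝ → ℝ) (hf : ContDiff ℝ n f)
    (h : m + 1 ≤ n) : ContDiff ℝ m (pd v f) :=
  (ContinuousLinearMap.apply ℝ ℝ v).contDiff.comp (hf.fderiv_right (by exact_mod_cast h))

lemma pd_apply_clm (f : ℝ × ℝ → ℝ) (hf : ContDiff ℝ 2 f) (v w : ℝ × ℝ) (q : ℝ × ℝ) :
    pd w (pd v f) q = fderiv ℝ (fderiv ℝ f) q w v := by
  have hd : DifferentiableAt ℝ (fderiv ℝ f) q :=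
    ((hf.fderiv_right (m := 1) (by norm_num)).differentiable (by norm_num)).differentiableAt
  show fderiv ℝ ((ContinuousLinearMap.apply ℝ ℝ v) ∘ (fderiv ℝ f)) q w = _
  rw [fderiv_comp q (ContinuousLinearMap.apply ℝ ℝ v).differentiableAt hd]
  simp

lemma pd_comm (f : ℝ × ℝ → ℝ) (hf : ContDiff ℝ 2 f) (v w : ℝ × ℝ) :
    pd w (pd v f) = pd v (pd w f) := by
  funext q
  rw [pd_apply_clm f hf v w q, pd_apply_clm f hf w v q]
  exact (hf.contDiffAt.isSymmSndFDerivAt (by simp)) w v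

lemma pd_comb (v : ℝ × ℝ) (a b c : ℝ) (f g h : ℝ × ℝ → ℝ)
    (hf : Differentiable ℝ f) (hg : Differentiable ℝ g) (hh : Differentiable ℝ h) :
    pd v (fun q => a * f q + b * g q + c * h q) =
      fun q => a * pd v f q + b * pd v g q + c * pd v h q := by
  funext q
  show fderiv ℝ _ q v = _
  rw [fderiv_fun_add (f := fun y => a * f y + b * g y) (((hf q).const_mul a).add ((hg q).const_mul b)) ((hh q).const_mul c),
    fderiv_fun_add ((hf q).const_mul a) ((hg q).const_mul b),
    fderiv_const_mul (hf q), fderiv_const_mul (hg q), fderiv_const_mul (hh q)]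
  simp [pd]

/-- Beltrami–Michell compatibility equation for 2D isotropic poroelasticity:
for stresses and pressure derived from a displacement `u = (u₁,u₂)` of class `C³`
and a rate of fluid change `ξ` of class `C²` through the poroelastic constitutive law,
`∂²σxy/∂x∂y = θ₀ ∂²σxx/∂x² + θ₁ ∂²σyy/∂x² + θ₂ ∂²p/∂x²
 + θ₁ ∂²σxx/∂y² + θ₀ ∂²σyy/∂y² + θ₂ ∂²p/∂y²`. -/
theorem beltrami_michell (lamf m β μ lam0 : ℝ)
    (hlam0 : lam0 = lamf - m * β ^ 2)
    (hden : lam0 + μ ≠ 0)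
    (u₁ u₂ ξ : ℝ × ℝ → ℝ)
    (hu₁ : ContDiff ℝ 3 u₁) (hu₂ : ContDiff ℝ 3 u₂) (hξ : ContDiff ℝ 2 ξ)
    (σxx σyy σxy p : ℝ × ℝ → ℝ)
    (hσxx : σxx = fun q => lamf * (pdx u₁ q + pdy u₂ q) + 2 * μ * pdx u₁ q - β * m * ξ q)
    (hσyy : σyy = fun q => lamf * (pdx u₁ q + pdy u₂ q) + 2 * μ * pdy u₂ q - β * m * ξ q)
    (hσxy : σxy = fun q => μ * (pdy u₁ q + pdx u₂ q))
    (hp : p = fun q => m * (-β * (pdx u₁ q + pdy u₂ q) + ξ q))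
    (θ₀ θ₁ θ₂ : ℝ)
    (hθ₀ : θ₀ = -lam0 / (4 * (lam0 + μ)))
    (hθ₁ : θ₁ = (lam0 + 2 * μ) / (4 * (lam0 + μ)))
    (hθ₂ : θ₂ = μ * β / (2 * (lam0 + μ))) :
    ∀ q : ℝ × ℝ,
      pdx (pdy σxy) q =
        θ₀ * pdx (pdx σxx) q + θ₁ * pdx (pdx σyy) q + θ₂ * pdx (pdx p) q +
        θ₁ * pdy (pdy σxx) q + θ₀ * pdy (pdy σyy) q + θ₂ * pdy (pdy p) q := by
  intro q
  set X : ℝ × ℝ := (1, 0) with hX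
  set Y : ℝ × ℝ := (0, 1) with hY
  have hpx : pdx = pd X := rfl
  have hpy : pdy = pd Y := rfl
  -- smoothness
  have h2u₁ : ContDiff ℝ 2 u₁ := hu₁.of_le (by norm_num)
  have h2u₂ : ContDiff ℝ 2 u₂ := hu₂.of_le (by norm_num)
  have c2u₁ : ∀ v, ContDiff ℝ 2 (pd v u₁) := fun v => contDiff_pd v u₁ hu₁ (by norm_num)
  have c2u₂ : ∀ v, ContDiff ℝ 2 (pd v u₂) := fun v => contDiff_pd v u₂ hu₂ (by norm_num)
  have d1u₁ : ∀ v, Differentiable ℝ (pd v u₁) := fun v => (c2u₁ v).differentiable (by norm_num)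
  have d1u₂ : ∀ v, Differentiable ℝ (pd v u₂) := fun v => (c2u₂ v).differentiable (by norm_num)
  have d2u₁ : ∀ v w, Differentiable ℝ (pd w (pd v u₁)) := fun v w =>
    ((contDiff_pd w _ (c2u₁ v) (by norm_num) : ContDiff ℝ 1 _).differentiable (by norm_num))
  have d2u₂ : ∀ v w, Differentiable ℝ (pd w (pd v u₂)) := fun v w =>
    ((contDiff_pd w _ (c2u₂ v) (by norm_num) : ContDiff ℝ 1 _).differentiable (by norm_num))
  have dξ : Differentiable ℝ ξ := hξ.differentiable (by norm_num)
  have d1ξ : ∀ v, Differentiable ℝ (pd v ξ) := fun v =>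
    ((contDiff_pd v ξ hξ (by norm_num) : ContDiff ℝ 1 _).differentiable (by norm_num))
  -- rewrite the stresses as linear combinations
  have exx : σxx = fun q => (lamf + 2 * μ) * pd X u₁ q + lamf * pd Y u₂ q + (-(β * m)) * ξ q := by
    rw [hσxx]; funext q; simp only [pdx, pdy, pd]; ring
  have eyy : σyy = fun q => lamf * pd X u₁ q + (lamf + 2 * μ) * pd Y u₂ q + (-(β * m)) * ξ q := by
    rw [hσyy]; funext q; simp only [pdx, pdy, pd]; ring
  have ep : p = fun q => (-(m * β)) * pd X u₁ q + (-(m * β)) * pd Y u₂ q + m * ξ q := by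
    rw [hp]; funext q; simp only [pdx, pdy, pd]; ring
  have exy : σxy = fun q => μ * pd Y u₁ q + μ * pd X u₂ q + 0 * ξ q := by
    rw [hσxy]; funext q; simp only [pdx, pdy, pd]; ring
  -- second derivatives of the combos
  have key : ∀ (a b c : ℝ) (F : ℝ × ℝ → ℝ) (w : ℝ × ℝ),
      F = (fun q => a * pd X u₁ q + b * pd Y u₂ q + c * ξ q) →
      pd w (pd w F) = fun q => a * pd w (pd w (pd X u₁)) q + b * pd w (pd w (pd Y u₂)) q
        + c * pd w (pd w ξ) q := by
    intro a b c F w hF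
    rw [hF, pd_comb w a b c _ _ _ (d1u₁ X) (d1u₂ Y) dξ,
      pd_comb w a b c _ _ _ (d2u₁ X w) (d2u₂ Y w) (d1ξ w)]
  have kxx_x := key (lamf + 2 * μ) lamf (-(β * m)) σxx X exx
  have kxx_y := key (lamf + 2 * μ) lamf (-(β * m)) σxx Y exx
  have kyy_x := key lamf (lamf + 2 * μ) (-(β * m)) σyy X eyy
  have kyy_y := key lamf (lamf + 2 * μ) (-(β * m)) σyy Y eyy
  have kp_x := key (-(m * β)) (-(m * β)) m p X ep
  have kp_y := key (-(m * β)) (-(m * β)) m p Y ep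
  -- the mixed derivative of σxy
  have exy1 : pd Y σxy = fun q => μ * pd Y (pd Y u₁) q + μ * pd Y (pd X u₂) q + 0 * pd Y ξ q := by
    rw [exy]; exact pd_comb Y μ μ 0 _ _ _ (d1u₁ Y) (d1u₂ X) dξ
  have exy2 : pd X (pd Y σxy) = fun q => μ * pd X (pd Y (pd Y u₁)) q
      + μ * pd X (pd Y (pd X u₂)) q + 0 * pd X (pd Y ξ) q := by
    rw [exy1]; exact pd_comb X μ μ 0 _ _ _ (d2u₁ Y Y) (d2u₂ X Y) (d1ξ Y)
  -- symmetry of mixed derivatives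
  have s1 : pd X (pd Y (pd Y u₁)) = pd Y (pd Y (pd X u₁)) := by
    rw [pd_comm (pd Y u₁) (c2u₁ Y) Y X, pd_comm u₁ h2u₁ Y X]
  have s2 : pd X (pd Y (pd X u₂)) = pd X (pd X (pd Y u₂)) := by
    rw [pd_comm u₂ h2u₂ X Y]
  rw [hpx, hpy]
  simp only [kxx_x, kxx_y, kyy_x, kyy_y, kp_x, kp_y, exy2, s1, s2]
  rw [hθ₀, hθ₁, hθ₂, hlam0]
  have hden' : (lamf - m * β ^ 2) + μ ≠ 0 := by rw [hlam0] at hden; exact hden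
  field_simp
  ring
end

section
/- Let Ω > 0 and θ > 0, and let w, ψ : ℝ → ℝ² be differentiable functions satisfying ψ′(t) = −(θ + Ω) ψ(t) + w′(t) + Ω w(t) for all t. Then for all t: d/dt [ |w(t) − ψ(t)|² / (2(θ + 2Ω)) ] − w(t)·ψ(t) = − ( Ω |w(t)|² + (θ + Ω) |ψ(t)|² ) / (θ + 2Ω). -/
open RealInnerProductSpace

/-- Pointwise energy identity underlying the decay of the Biot-JKD energy:
if `ψ′ = −(θ+Ω) ψ + w′ + Ω w`, then
`d/dt [ |w−ψ|²/(2(θ+2Ω)) ] − w·ψ = −(Ω|w|² + (θ+Ω)|ψ|²)/(θ+2Ω)`. -/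
theorem pointwise_energy_identity (Ω θ : ℝ) (hΩ : 0 < Ω) (hθ : 0 < θ)
    (w ψ : ℝ → EuclideanSpace ℝ (Fin 2))
    (hw : Differentiable ℝ w) (hψ : Differentiable ℝ ψ)
    (hode : ∀ t : ℝ, deriv ψ t = -(θ + Ω) • ψ t + deriv w t + Ω • w t) :
    ∀ t : ℝ,
      deriv (fun s => ‖w s - ψ s‖ ^ 2 / (2 * (θ + 2 * Ω))) t - ⟪w t, ψ t⟫ =
        -(Ω * ‖w t‖ ^ 2 + (θ + Ω) * ‖ψ t‖ ^ 2) / (θ + 2 * Ω) := by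
  intro t
  have hc : θ + 2 * Ω ≠ 0 := by positivity
  have hu : HasDerivAt (fun s => w s - ψ s) (deriv w t - deriv ψ t) t :=
    (hw t).hasDerivAt.sub (hψ t).hasDerivAt
  have hinner : HasDerivAt (fun s => ⟪w s - ψ s, w s - ψ s⟫)
      (⟪w t - ψ t, deriv w t - deriv ψ t⟫ + ⟪deriv w t - deriv ψ t, w t - ψ t⟫) t :=
    hu.inner ℝ hu
  have hfun : (fun s => ‖w s - ψ s‖ ^ 2 / (2 * (θ + 2 * Ω))) =
      (fun s => ⟪w s - ψ s, w s - ψ s⟫ / (2 * (θ + 2 * Ω))) := by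
    funext s
    rw [real_inner_self_eq_norm_sq]
  have hderiv : deriv (fun s => ‖w s - ψ s‖ ^ 2 / (2 * (θ + 2 * Ω))) t =
      (⟪w t - ψ t, deriv w t - deriv ψ t⟫ + ⟪deriv w t - deriv ψ t, w t - ψ t⟫)
        / (2 * (θ + 2 * Ω)) := by
    rw [hfun]
    exact (hinner.div_const _).deriv
  rw [hderiv, hode t]
  have h1 : deriv w t - (-(θ + Ω) • ψ t + deriv w t + Ω • w t)
      = (θ + Ω) • ψ t - Ω • w t := by
    module
  rw [h1]
  simp only [inner_sub_left, inner_sub_right, inner_smul_left, inner_smul_right,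
    real_inner_comm (ψ t) (w t), real_inner_self_eq_norm_sq, RCLike.ofReal_real_eq_id, id, conj_trivial]
  field_simp
  ring
end

section
/- Let ρ, ρ_f, ρ_w, λ₀, μ, β ∈ ℝ with m > 0. Let u_s, W : ℝ² × ℝ → ℝ² be C² fields, compactly supported in the space variables for each time, and set v_s = ∂u_s/∂t, w = ∂W/∂t, ε = (∇u_s + ∇u_sᵀ)/2, ξ = −div W, p = m(−β tr ε + ξ) and σ = λ₀ (tr ε) I + 2με − β p I. Let g : ℝ² × ℝ → ℝ² be continuous, and suppose that ρ ∂v_s/∂t + ρ_f ∂w/∂t = div σ and ρ_f ∂v_s/∂t + ρ_w ∂w/∂t + g = −∇p on ℝ² × ℝ. Define E₁(t) = (1/2) ∫_{ℝ²} ( ρ|v_s|² + ρ_w|w|² + 2ρ_f v_s·w ) dx dy and E₂(t) = (1/2) ∫_{ℝ²} ( λ₀ (tr ε)² + 2μ ε:ε + p²/m ) dx dy. Then d(E₁ + E₂)/dt = − ∫_{ℝ²} g · w dx dy. -/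
open MeasureTheory

/-- Partial derivative in the first (x) space variable, for functions of `(x, y, t)`. -/
noncomputable def pX (f : ℝ × ℝ × ℝ → ℝ) : ℝ × ℝ × ℝ → ℝ := fun q => fderiv ℝ f q (1, 0, 0)

/-- Partial derivative in the second (y) space variable. -/
noncomputable def pY (f : ℝ × ℝ × ℝ → ℝ) : ℝ × ℝ × ℝ → ℝ := fun q => fderiv ℝ f q (0, 1, 0)

/-- Partial derivative in the time variable. -/
noncomputable def pT (f : ℝ × ℝ × ℝ → ℝ) : ℝ × ℝ × ℝ → ℝ := fun q => fderiv ℝ f q (0, 0, 1)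

open Set

lemma biot_sliceX {f : ℝ × ℝ × ℝ → ℝ} (hf : Differentiable ℝ f) (q : ℝ × ℝ × ℝ) :
    HasDerivAt (fun x => f (x, q.2.1, q.2.2)) (pX f q) q.1 := by
  have hL : HasDerivAt (fun x : ℝ => ((x, q.2.1, q.2.2) : ℝ × ℝ × ℝ))
      (((1 : ℝ), (0 : ℝ), (0 : ℝ))) q.1 :=
    HasDerivAt.prodMk (hasDerivAt_id _) (HasDerivAt.prodMk (hasDerivAt_const _ _) (hasDerivAt_const _ _))
  exact (hf q).hasFDerivAt.comp_hasDerivAt q.1 hL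

lemma biot_sliceY {f : ℝ × ℝ × ℝ → ℝ} (hf : Differentiable ℝ f) (q : ℝ × ℝ × ℝ) :
    HasDerivAt (fun y => f (q.1, y, q.2.2)) (pY f q) q.2.1 := by
  have hL : HasDerivAt (fun y : ℝ => ((q.1, y, q.2.2) : ℝ × ℝ × ℝ))
      (((0 : ℝ), (1 : ℝ), (0 : ℝ))) q.2.1 :=
    HasDerivAt.prodMk (hasDerivAt_const _ _) (HasDerivAt.prodMk (hasDerivAt_id _) (hasDerivAt_const _ _))
  exact (hf q).hasFDerivAt.comp_hasDerivAt q.2.1 hL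

lemma biot_sliceT {f : ℝ × ℝ × ℝ → ℝ} (hf : Differentiable ℝ f) (q : ℝ × ℝ × ℝ) :
    HasDerivAt (fun t => f (q.1, q.2.1, t)) (pT f q) q.2.2 := by
  have hL : HasDerivAt (fun t : ℝ => ((q.1, q.2.1, t) : ℝ × ℝ × ℝ))
      (((0 : ℝ), (0 : ℝ), (1 : ℝ))) q.2.2 :=
    HasDerivAt.prodMk (hasDerivAt_const _ _) (HasDerivAt.prodMk (hasDerivAt_const _ _) (hasDerivAt_id _))
  exact (hf q).hasFDerivAt.comp_hasDerivAt q.2.2 hL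

lemma biot_contDiff_pX {f : ℝ × ℝ × ℝ → ℝ} (hf : ContDiff ℝ 2 f) : ContDiff ℝ 1 (pX f) :=
  (hf.fderiv_right (by norm_num)).clm_apply contDiff_const
lemma biot_contDiff_pY {f : ℝ × ℝ × ℝ → ℝ} (hf : ContDiff ℝ 2 f) : ContDiff ℝ 1 (pY f) :=
  (hf.fderiv_right (by norm_num)).clm_apply contDiff_const
lemma biot_contDiff_pT {f : ℝ × ℝ × ℝ → ℝ} (hf : ContDiff ℝ 2 f) : ContDiff ℝ 1 (pT f) :=
  (hf.fderiv_right (by norm_num)).clm_apply contDiff_const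

lemma biot_cont1_pX {f : ℝ × ℝ × ℝ → ℝ} (hf : ContDiff ℝ 1 f) : Continuous (pX f) :=
  ((hf.fderiv_right (m := 0) (by norm_num)).clm_apply contDiff_const).continuous
lemma biot_cont1_pY {f : ℝ × ℝ × ℝ → ℝ} (hf : ContDiff ℝ 1 f) : Continuous (pY f) :=
  ((hf.fderiv_right (m := 0) (by norm_num)).clm_apply contDiff_const).continuous
lemma biot_cont1_pT {f : ℝ × ℝ × ℝ → ℝ} (hf : ContDiff ℝ 1 f) : Continuous (pT f) :=
  ((hf.fderiv_right (m := 0) (by norm_num)).clm_apply contDiff_const).continuous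

lemma biot_symm {f : ℝ × ℝ × ℝ → ℝ} (hf : ContDiff ℝ 2 f) (u v : ℝ × ℝ × ℝ)
    (q : ℝ × ℝ × ℝ) :
    fderiv ℝ (fun x => fderiv ℝ f x u) q v = fderiv ℝ (fun x => fderiv ℝ f x v) q u := by
  have hd : ContDiff ℝ 1 (fderiv ℝ f) := hf.fderiv_right (by norm_num)
  have h1 : ∀ y, HasFDerivAt f (fderiv ℝ f y) y :=
    fun y => (hf.differentiable (by norm_num) y).hasFDerivAt
  have h2 : HasFDerivAt (fderiv ℝ f) (fderiv ℝ (fderiv ℝ f) q) q :=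
    (hd.differentiable one_ne_zero q).hasFDerivAt
  have hs := second_derivative_symmetric h1 h2 u v
  have e1 : fderiv ℝ (fun x => fderiv ℝ f x u) q = (fderiv ℝ (fderiv ℝ f) q).flip u := by
    have := fderiv_clm_apply (hd.differentiable one_ne_zero q) (differentiableAt_const (c := u))
    simpa using this
  have e2 : fderiv ℝ (fun x => fderiv ℝ f x v) q = (fderiv ℝ (fderiv ℝ f) q).flip v := by
    have := fderiv_clm_apply (hd.differentiable one_ne_zero q) (differentiableAt_const (c := v))
    simpa using this
  rw [e1, e2]
  simpa using hs.symm

lemma biot_swapX {f : ℝ × ℝ × ℝ → ℝ} (hf : ContDiff ℝ 2 f) (q : ℝ × ℝ × ℝ) :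
    pT (pX f) q = pX (pT f) q := biot_symm hf _ _ q
lemma biot_swapY {f : ℝ × ℝ × ℝ → ℝ} (hf : ContDiff ℝ 2 f) (q : ℝ × ℝ × ℝ) :
    pT (pY f) q = pY (pT f) q := biot_symm hf _ _ q

lemma biot_vanish {K : Set (ℝ × ℝ)} (hK : IsClosed K) {f : ℝ × ℝ × ℝ → ℝ}
    (h0 : ∀ x y t : ℝ, (x, y) ∉ K → f (x, y, t) = 0) {x y : ℝ} (hxy : (x, y) ∉ K)
    (t : ℝ) (u : ℝ × ℝ × ℝ) : fderiv ℝ f (x, y, t) u = 0 := by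
  have hopen : IsOpen {q : ℝ × ℝ × ℝ | (q.1, q.2.1) ∉ K} :=
    hK.isOpen_compl.preimage (continuous_fst.prodMk (continuous_fst.comp continuous_snd))
  have hev : f =ᶠ[nhds ((x, y, t) : ℝ × ℝ × ℝ)] fun _ => (0 : ℝ) := by
    filter_upwards [hopen.mem_nhds (by exact hxy)] with q hq
    exact h0 q.1 q.2.1 q.2.2 hq
  rw [hev.fderiv_eq, fderiv_fun_const]
  simp

lemma biot_integrable_slice {K : Set (ℝ × ℝ)} (hK : IsCompact K) {F : ℝ × ℝ × ℝ → ℝ}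
    (hF : Continuous F) (h0 : ∀ x y t : ℝ, (x, y) ∉ K → F (x, y, t) = 0) (t : ℝ) :
    Integrable (fun s : ℝ × ℝ => F (s.1, s.2, t)) := by
  apply Continuous.integrable_of_hasCompactSupport
  · exact hF.comp (continuous_fst.prodMk (continuous_snd.prodMk continuous_const))
  · exact HasCompactSupport.intro hK fun s hs => h0 s.1 s.2 t hs

lemma biot_integral_deriv_zero {h : ℝ → ℝ} (hh : ContDiff ℝ 1 h)
    (hs : HasCompactSupport h) : ∫ x : ℝ, deriv h x = 0 := by
  have hint : Integrable (deriv h) :=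
    (hh.continuous_deriv le_rfl).integrable_of_hasCompactSupport hs.deriv
  have h1 := hs.integral_Iic_deriv_eq hh 0
  have h2 := hs.integral_Ioi_deriv_eq hh 0
  have := intervalIntegral.integral_Iic_add_Ioi (b := (0:ℝ))
    hint.integrableOn hint.integrableOn
  rw [← this, h1, h2]; ring

lemma biot_div_zero_X {K : Set (ℝ × ℝ)} (hK : IsCompact K) {Φ : ℝ × ℝ × ℝ → ℝ}
    (hΦ : ContDiff ℝ 1 Φ) (h0 : ∀ x y t : ℝ, (x, y) ∉ K → Φ (x, y, t) = 0) (t : ℝ) :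
    ∫ s : ℝ × ℝ, pX Φ (s.1, s.2, t) = 0 := by
  have hcont : Continuous (pX Φ) := biot_cont1_pX hΦ
  have h0' : ∀ x y τ : ℝ, (x, y) ∉ K → pX Φ (x, y, τ) = 0 := fun x y τ hxy =>
    biot_vanish hK.isClosed h0 hxy τ _
  have hint := biot_integrable_slice hK hcont h0' t
  rw [show (volume : Measure (ℝ × ℝ)) = (volume : Measure ℝ).prod volume from
    Measure.volume_eq_prod ℝ ℝ] at hint ⊢
  rw [integral_prod_symm _ hint]
  have : ∀ y : ℝ, ∫ x : ℝ, pX Φ (x, y, t) = 0 := by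
    intro y
    set h : ℝ → ℝ := fun x => Φ (x, y, t) with hh
    have hhc : ContDiff ℝ 1 h := hΦ.comp (contDiff_id.prodMk contDiff_const)
    have hhs : HasCompactSupport h := by
      apply HasCompactSupport.intro (hK.image continuous_fst)
      intro x hx
      apply h0 x y t
      intro hmem
      exact hx ⟨(x, y), hmem, rfl⟩
    have hder : ∀ x : ℝ, deriv h x = pX Φ (x, y, t) := by
      intro x
      have hL : HasDerivAt (fun x' : ℝ => ((x', y, t) : ℝ × ℝ × ℝ))
          (((1 : ℝ), (0 : ℝ), (0 : ℝ))) x :=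
        HasDerivAt.prodMk (hasDerivAt_id _) (HasDerivAt.prodMk (hasDerivAt_const _ _) (hasDerivAt_const _ _))
      exact (((hΦ.differentiable one_ne_zero) _).hasFDerivAt.comp_hasDerivAt x hL).deriv
    calc ∫ x : ℝ, pX Φ (x, y, t) = ∫ x : ℝ, deriv h x :=
          integral_congr_ae (Filter.Eventually.of_forall fun x => (hder x).symm)
      _ = 0 := biot_integral_deriv_zero hhc hhs
  simp only [this, integral_zero]

lemma biot_div_zero_Y {K : Set (ℝ × ℝ)} (hK : IsCompact K) {Φ : ℝ × ℝ × ℝ → ℝ}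
    (hΦ : ContDiff ℝ 1 Φ) (h0 : ∀ x y t : ℝ, (x, y) ∉ K → Φ (x, y, t) = 0) (t : ℝ) :
    ∫ s : ℝ × ℝ, pY Φ (s.1, s.2, t) = 0 := by
  have hcont : Continuous (pY Φ) := biot_cont1_pY hΦ
  have h0' : ∀ x y τ : ℝ, (x, y) ∉ K → pY Φ (x, y, τ) = 0 := fun x y τ hxy =>
    biot_vanish hK.isClosed h0 hxy τ _
  have hint := biot_integrable_slice hK hcont h0' t
  rw [show (volume : Measure (ℝ × ℝ)) = (volume : Measure ℝ).prod volume from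
    Measure.volume_eq_prod ℝ ℝ] at hint ⊢
  rw [integral_prod _ hint]
  have : ∀ x : ℝ, ∫ y : ℝ, pY Φ (x, y, t) = 0 := by
    intro x
    set h : ℝ → ℝ := fun y => Φ (x, y, t) with hh
    have hhc : ContDiff ℝ 1 h :=
      hΦ.comp (contDiff_const.prodMk (contDiff_id.prodMk contDiff_const))
    have hhs : HasCompactSupport h := by
      apply HasCompactSupport.intro (hK.image continuous_snd)
      intro y hy
      apply h0 x y t
      intro hmem
      exact hy ⟨(x, y), hmem, rfl⟩
    have hder : ∀ y : ℝ, deriv h y = pY Φ (x, y, t) := by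
      intro y
      have hL : HasDerivAt (fun y' : ℝ => ((x, y', t) : ℝ × ℝ × ℝ))
          (((0 : ℝ), (1 : ℝ), (0 : ℝ))) y :=
        HasDerivAt.prodMk (hasDerivAt_const _ _) (HasDerivAt.prodMk (hasDerivAt_id _) (hasDerivAt_const _ _))
      exact (((hΦ.differentiable one_ne_zero) _).hasFDerivAt.comp_hasDerivAt y hL).deriv
    calc ∫ y : ℝ, pY Φ (x, y, t) = ∫ y : ℝ, deriv h y :=
          integral_congr_ae (Filter.Eventually.of_forall fun y => (hder y).symm)
      _ = 0 := biot_integral_deriv_zero hhc hhs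
  simp only [this, integral_zero]

open Metric in
lemma biot_param {K : Set (ℝ × ℝ)} (hK : IsCompact K) {F : ℝ × ℝ × ℝ → ℝ}
    (hF : ContDiff ℝ 1 F) (h0 : ∀ x y t : ℝ, (x, y) ∉ K → F (x, y, t) = 0) (t₀ : ℝ) :
    HasDerivAt (fun τ => ∫ s : ℝ × ℝ, F (s.1, s.2, τ))
      (∫ s : ℝ × ℝ, pT F (s.1, s.2, t₀)) t₀ := by
  have hcont : Continuous (pT F) := biot_cont1_pT hF
  have h0' : ∀ x y τ : ℝ, (x, y) ∉ K → pT F (x, y, τ) = 0 := fun x y τ hxy =>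
    biot_vanish hK.isClosed h0 hxy τ _
  have hQ : IsCompact (K ×ˢ Icc (t₀ - 1) (t₀ + 1)) := hK.prod isCompact_Icc
  have hφ : Continuous (fun z : (ℝ × ℝ) × ℝ => pT F (z.1.1, z.1.2, z.2)) :=
    hcont.comp ((continuous_fst.fst).prodMk ((continuous_fst.snd).prodMk continuous_snd))
  obtain ⟨C, hC⟩ := hQ.exists_bound_of_continuousOn hφ.continuousOn
  set bound : ℝ × ℝ → ℝ := K.indicator fun _ => C with hbound
  have hb_int : Integrable bound := by
    rw [hbound, integrable_indicator_iff hK.measurableSet]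
    exact integrableOn_const hK.measure_lt_top.ne
  have key := hasDerivAt_integral_of_dominated_loc_of_deriv_le
    (F := fun τ (s : ℝ × ℝ) => F (s.1, s.2, τ))
    (F' := fun τ (s : ℝ × ℝ) => pT F (s.1, s.2, τ))
    (x₀ := t₀) (bound := bound) (s := Metric.ball t₀ 1) (Metric.ball_mem_nhds t₀ one_pos)
    ?hFmeas ?hFint ?hF'meas ?hbd hb_int ?hdiff
  · exact key.2
  case hFmeas =>
    filter_upwards with τ
    exact (hF.continuous.comp
      (continuous_fst.prodMk (continuous_snd.prodMk continuous_const))).aestronglyMeasurable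
  case hFint =>
    exact biot_integrable_slice hK hF.continuous h0 t₀
  case hF'meas =>
    exact (hcont.comp
      (continuous_fst.prodMk (continuous_snd.prodMk continuous_const))).aestronglyMeasurable
  case hbd =>
    filter_upwards with s
    intro τ hτ
    by_cases hs : s ∈ K
    · have hτ' : τ ∈ Icc (t₀ - 1) (t₀ + 1) := by
        rw [mem_ball, Real.dist_eq] at hτ
        constructor <;> [linarith [abs_lt.mp hτ]; linarith [(abs_lt.mp hτ).2]]
      have := hC ((s, τ)) (mk_mem_prod hs hτ')
      simpa [hbound, indicator_of_mem hs] using this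
    · rw [h0' s.1 s.2 τ hs]
      simp [hbound, indicator_of_notMem hs]
  case hdiff =>
    filter_upwards with s
    intro τ hτ
    have hL : HasDerivAt (fun t : ℝ => ((s.1, s.2, t) : ℝ × ℝ × ℝ))
        (((0 : ℝ), (0 : ℝ), (1 : ℝ))) τ :=
      HasDerivAt.prodMk (hasDerivAt_const _ _) (HasDerivAt.prodMk (hasDerivAt_const _ _) (hasDerivAt_id _))
    exact ((hF.differentiable one_ne_zero _).hasFDerivAt.comp_hasDerivAt τ hL)

noncomputable def biotP (β m : ℝ) (us₁ us₂ W₁ W₂ : ℝ × ℝ × ℝ → ℝ) : ℝ × ℝ × ℝ → ℝ := fun q =>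
  m * (-β * (pX us₁ q + pY us₂ q) + -(pX W₁ q + pY W₂ q))

noncomputable def biotE (ρ ρf ρw lam0 μ β m : ℝ) (us₁ us₂ W₁ W₂ : ℝ × ℝ × ℝ → ℝ) :
    ℝ × ℝ × ℝ → ℝ := fun q =>
  (1/2) * (ρ * (pT us₁ q ^ 2 + pT us₂ q ^ 2) + ρw * (pT W₁ q ^ 2 + pT W₂ q ^ 2)
      + 2 * ρf * (pT us₁ q * pT W₁ q + pT us₂ q * pT W₂ q))
  + (1/2) * (lam0 * (pX us₁ q + pY us₂ q) ^ 2
      + 2 * μ * (pX us₁ q ^ 2 + 2 * ((pY us₁ q + pX us₂ q) / 2) ^ 2 + pY us₂ q ^ 2)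
      + biotP β m us₁ us₂ W₁ W₂ q ^ 2 / m)

noncomputable def biotSxx (lam0 μ β m : ℝ) (us₁ us₂ W₁ W₂ : ℝ × ℝ × ℝ → ℝ) :
    ℝ × ℝ × ℝ → ℝ := fun q =>
  lam0 * (pX us₁ q + pY us₂ q) + 2 * μ * pX us₁ q - β * biotP β m us₁ us₂ W₁ W₂ q

noncomputable def biotSyy (lam0 μ β m : ℝ) (us₁ us₂ W₁ W₂ : ℝ × ℝ × ℝ → ℝ) :
    ℝ × ℝ × ℝ → ℝ := fun q =>
  lam0 * (pX us₁ q + pY us₂ q) + 2 * μ * pY us₂ q - β * biotP β m us₁ us₂ W₁ W₂ q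

noncomputable def biotSxy (μ : ℝ) (us₁ us₂ : ℝ × ℝ × ℝ → ℝ) : ℝ × ℝ × ℝ → ℝ := fun q =>
  2 * μ * ((pY us₁ q + pX us₂ q) / 2)

noncomputable def biotPhi1 (lam0 μ β m : ℝ) (us₁ us₂ W₁ W₂ : ℝ × ℝ × ℝ → ℝ) :
    ℝ × ℝ × ℝ → ℝ := fun q =>
  biotSxx lam0 μ β m us₁ us₂ W₁ W₂ q * pT us₁ q + biotSxy μ us₁ us₂ q * pT us₂ q
    - biotP β m us₁ us₂ W₁ W₂ q * pT W₁ q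

noncomputable def biotPhi2 (lam0 μ β m : ℝ) (us₁ us₂ W₁ W₂ : ℝ × ℝ × ℝ → ℝ) :
    ℝ × ℝ × ℝ → ℝ := fun q =>
  biotSxy μ us₁ us₂ q * pT us₁ q + biotSyy lam0 μ β m us₁ us₂ W₁ W₂ q * pT us₂ q
    - biotP β m us₁ us₂ W₁ W₂ q * pT W₂ q

section reg
variable {ρ ρf ρw lam0 μ β m : ℝ} {us₁ us₂ W₁ W₂ : ℝ × ℝ × ℝ → ℝ}
variable (hus₁ : ContDiff ℝ 2 us₁) (hus₂ : ContDiff ℝ 2 us₂)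
variable (hW₁ : ContDiff ℝ 2 W₁) (hW₂ : ContDiff ℝ 2 W₂)

include hus₁ hus₂ hW₁ hW₂ in
lemma biotP_contDiff : ContDiff ℝ 1 (biotP β m us₁ us₂ W₁ W₂) := by
  have h1 := biot_contDiff_pX hus₁
  have h2 := biot_contDiff_pY hus₂
  have h3 := biot_contDiff_pX hW₁
  have h4 := biot_contDiff_pY hW₂
  unfold biotP
  fun_prop

include hus₁ hus₂ hW₁ hW₂ in
lemma biotSxx_contDiff : ContDiff ℝ 1 (biotSxx lam0 μ β m us₁ us₂ W₁ W₂) := by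
  have h1 := biot_contDiff_pX hus₁
  have h2 := biot_contDiff_pY hus₂
  have h5 := biotP_contDiff hus₁ hus₂ hW₁ hW₂ (β := β) (m := m)
  unfold biotSxx
  fun_prop

include hus₁ hus₂ hW₁ hW₂ in
lemma biotSyy_contDiff : ContDiff ℝ 1 (biotSyy lam0 μ β m us₁ us₂ W₁ W₂) := by
  have h1 := biot_contDiff_pX hus₁
  have h2 := biot_contDiff_pY hus₂
  have h5 := biotP_contDiff hus₁ hus₂ hW₁ hW₂ (β := β) (m := m)
  unfold biotSyy
  fun_prop

include hus₁ hus₂ in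
lemma biotSxy_contDiff : ContDiff ℝ 1 (biotSxy μ us₁ us₂) := by
  have h1 := biot_contDiff_pY hus₁
  have h2 := biot_contDiff_pX hus₂
  unfold biotSxy
  fun_prop (disch := norm_num)

include hus₁ hus₂ hW₁ hW₂ in
lemma biotE_contDiff (hm : m ≠ 0) : ContDiff ℝ 1 (biotE ρ ρf ρw lam0 μ β m us₁ us₂ W₁ W₂) := by
  have h1 := biot_contDiff_pX hus₁
  have h2 := biot_contDiff_pY hus₂
  have h3 := biot_contDiff_pX hW₁
  have h4 := biot_contDiff_pY hW₂
  have h5 := biot_contDiff_pY hus₁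
  have h6 := biot_contDiff_pX hus₂
  have h7 := biot_contDiff_pT hus₁
  have h8 := biot_contDiff_pT hus₂
  have h9 := biot_contDiff_pT hW₁
  have h10 := biot_contDiff_pT hW₂
  unfold biotE biotP
  fun_prop (disch := intros; first | assumption | norm_num)

include hus₁ hus₂ hW₁ hW₂ in
lemma biotPhi1_contDiff : ContDiff ℝ 1 (biotPhi1 lam0 μ β m us₁ us₂ W₁ W₂) := by
  have h1 := biotSxx_contDiff hus₁ hus₂ hW₁ hW₂ (lam0 := lam0) (μ := μ) (β := β) (m := m)
  have h2 := biotSxy_contDiff hus₁ hus₂ (μ := μ)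
  have h3 := biotP_contDiff hus₁ hus₂ hW₁ hW₂ (β := β) (m := m)
  have h7 := biot_contDiff_pT hus₁
  have h8 := biot_contDiff_pT hus₂
  have h9 := biot_contDiff_pT hW₁
  unfold biotPhi1
  fun_prop

include hus₁ hus₂ hW₁ hW₂ in
lemma biotPhi2_contDiff : ContDiff ℝ 1 (biotPhi2 lam0 μ β m us₁ us₂ W₁ W₂) := by
  have h1 := biotSyy_contDiff hus₁ hus₂ hW₁ hW₂ (lam0 := lam0) (μ := μ) (β := β) (m := m)
  have h2 := biotSxy_contDiff hus₁ hus₂ (μ := μ)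
  have h3 := biotP_contDiff hus₁ hus₂ hW₁ hW₂ (β := β) (m := m)
  have h7 := biot_contDiff_pT hus₁
  have h8 := biot_contDiff_pT hus₂
  have h10 := biot_contDiff_pT hW₂
  unfold biotPhi2
  fun_prop

include hus₁ hus₂ hW₁ hW₂ in
lemma biotE_pT (hm : m ≠ 0) (q : ℝ × ℝ × ℝ) :
    pT (biotE ρ ρf ρw lam0 μ β m us₁ us₂ W₁ W₂) q =
      ρ * (pT us₁ q * pT (pT us₁) q + pT us₂ q * pT (pT us₂) q)
      + ρw * (pT W₁ q * pT (pT W₁) q + pT W₂ q * pT (pT W₂) q)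
      + ρf * (pT (pT us₁) q * pT W₁ q + pT us₁ q * pT (pT W₁) q
          + pT (pT us₂) q * pT W₂ q + pT us₂ q * pT (pT W₂) q)
      + lam0 * (pX us₁ q + pY us₂ q) * (pX (pT us₁) q + pY (pT us₂) q)
      + 2 * μ * (pX us₁ q * pX (pT us₁) q
          + ((pY us₁ q + pX us₂ q) / 2) * ((pY (pT us₁) q + pX (pT us₂) q) / 2) * 2
          + pY us₂ q * pY (pT us₂) q)
      + biotP β m us₁ us₂ W₁ W₂ q
          * (-β * (pX (pT us₁) q + pY (pT us₂) q) + -(pX (pT W₁) q + pY (pT W₂) q)) := by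
  have hTu1 := biot_sliceT ((biot_contDiff_pT hus₁).differentiable one_ne_zero) q
  have hTu2 := biot_sliceT ((biot_contDiff_pT hus₂).differentiable one_ne_zero) q
  have hTW1 := biot_sliceT ((biot_contDiff_pT hW₁).differentiable one_ne_zero) q
  have hTW2 := biot_sliceT ((biot_contDiff_pT hW₂).differentiable one_ne_zero) q
  have hXu1 := biot_sliceT ((biot_contDiff_pX hus₁).differentiable one_ne_zero) q
  have hYu2 := biot_sliceT ((biot_contDiff_pY hus₂).differentiable one_ne_zero) q
  have hYu1 := biot_sliceT ((biot_contDiff_pY hus₁).differentiable one_ne_zero) q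
  have hXu2 := biot_sliceT ((biot_contDiff_pX hus₂).differentiable one_ne_zero) q
  have hXW1 := biot_sliceT ((biot_contDiff_pX hW₁).differentiable one_ne_zero) q
  have hYW2 := biot_sliceT ((biot_contDiff_pY hW₂).differentiable one_ne_zero) q
  have hPb := ((((hXu1.add hYu2).const_mul (-β)).add ((hXW1.add hYW2).neg)).const_mul m)
  have hK1 := ((hTu1.pow (n := 2)).add (hTu2.pow (n := 2))).const_mul ρ
  have hK2 := ((hTW1.pow (n := 2)).add (hTW2.pow (n := 2))).const_mul ρw
  have hK3 := ((hTu1.mul hTW1).add (hTu2.mul hTW2)).const_mul (2 * ρf)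
  have hKin := ((hK1.add hK2).add hK3).const_mul (1/2 : ℝ)
  have hE1 := ((hXu1.add hYu2).pow (n := 2)).const_mul lam0
  have hE2 := (((hXu1.pow (n := 2)).add
      ((((hYu1.add hXu2).div_const 2).pow (n := 2)).const_mul 2)).add
      (hYu2.pow (n := 2))).const_mul (2 * μ)
  have hE3 := (hPb.pow (n := 2)).div_const m
  have hEl := ((hE1.add hE2).add hE3).const_mul (1/2 : ℝ)
  have hbuild := hKin.add hEl
  have huniq := hbuild.unique
    (biot_sliceT ((biotE_contDiff hus₁ hus₂ hW₁ hW₂ hm).differentiable one_ne_zero) q)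
  rw [← huniq, biot_swapX hus₁ q, biot_swapY hus₂ q, biot_swapY hus₁ q, biot_swapX hus₂ q,
    biot_swapX hW₁ q, biot_swapY hW₂ q]
  simp only [Prod.mk.eta, biotP, Pi.add_apply, Pi.mul_apply, Pi.pow_apply, Pi.neg_apply,
    Pi.sub_apply]
  push_cast
  field_simp
  ring

include hus₁ hus₂ hW₁ hW₂ in
lemma biotPhi1_pX (q : ℝ × ℝ × ℝ) :
    pX (biotPhi1 lam0 μ β m us₁ us₂ W₁ W₂) q =
      (pX (biotSxx lam0 μ β m us₁ us₂ W₁ W₂) q * pT us₁ q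
        + biotSxx lam0 μ β m us₁ us₂ W₁ W₂ q * pX (pT us₁) q)
      + (pX (biotSxy μ us₁ us₂) q * pT us₂ q + biotSxy μ us₁ us₂ q * pX (pT us₂) q)
      - (pX (biotP β m us₁ us₂ W₁ W₂) q * pT W₁ q
        + biotP β m us₁ us₂ W₁ W₂ q * pX (pT W₁) q) := by
  have hSxx := biot_sliceX ((biotSxx_contDiff hus₁ hus₂ hW₁ hW₂
    (lam0 := lam0) (μ := μ) (β := β) (m := m)).differentiable one_ne_zero) q
  have hSxy := biot_sliceX ((biotSxy_contDiff hus₁ hus₂ (μ := μ)).differentiable one_ne_zero) q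
  have hP := biot_sliceX ((biotP_contDiff hus₁ hus₂ hW₁ hW₂
    (β := β) (m := m)).differentiable one_ne_zero) q
  have hTu1 := biot_sliceX ((biot_contDiff_pT hus₁).differentiable one_ne_zero) q
  have hTu2 := biot_sliceX ((biot_contDiff_pT hus₂).differentiable one_ne_zero) q
  have hTW1 := biot_sliceX ((biot_contDiff_pT hW₁).differentiable one_ne_zero) q
  have hbuild := ((hSxx.mul hTu1).add (hSxy.mul hTu2)).sub (hP.mul hTW1)
  have huniq := hbuild.unique (biot_sliceX ((biotPhi1_contDiff hus₁ hus₂ hW₁ hW₂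
    (lam0 := lam0) (μ := μ) (β := β) (m := m)).differentiable one_ne_zero) q)
  rw [← huniq]

include hus₁ hus₂ hW₁ hW₂ in
lemma biotPhi2_pY (q : ℝ × ℝ × ℝ) :
    pY (biotPhi2 lam0 μ β m us₁ us₂ W₁ W₂) q =
      (pY (biotSxy μ us₁ us₂) q * pT us₁ q + biotSxy μ us₁ us₂ q * pY (pT us₁) q)
      + (pY (biotSyy lam0 μ β m us₁ us₂ W₁ W₂) q * pT us₂ q
        + biotSyy lam0 μ β m us₁ us₂ W₁ W₂ q * pY (pT us₂) q)
      - (pY (biotP β m us₁ us₂ W₁ W₂) q * pT W₂ q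
        + biotP β m us₁ us₂ W₁ W₂ q * pY (pT W₂) q) := by
  have hSyy := biot_sliceY ((biotSyy_contDiff hus₁ hus₂ hW₁ hW₂
    (lam0 := lam0) (μ := μ) (β := β) (m := m)).differentiable one_ne_zero) q
  have hSxy := biot_sliceY ((biotSxy_contDiff hus₁ hus₂ (μ := μ)).differentiable one_ne_zero) q
  have hP := biot_sliceY ((biotP_contDiff hus₁ hus₂ hW₁ hW₂
    (β := β) (m := m)).differentiable one_ne_zero) q
  have hTu1 := biot_sliceY ((biot_contDiff_pT hus₁).differentiable one_ne_zero) q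
  have hTu2 := biot_sliceY ((biot_contDiff_pT hus₂).differentiable one_ne_zero) q
  have hTW2 := biot_sliceY ((biot_contDiff_pT hW₂).differentiable one_ne_zero) q
  have hbuild := ((hSxy.mul hTu1).add (hSyy.mul hTu2)).sub (hP.mul hTW2)
  have huniq := hbuild.unique (biot_sliceY ((biotPhi2_contDiff hus₁ hus₂ hW₁ hW₂
    (lam0 := lam0) (μ := μ) (β := β) (m := m)).differentiable one_ne_zero) q)
  rw [← huniq]

end reg

/-- Energy balance for the 2D Biot poroelastic system with a general dissipation
force `g`: with kinetic energy `E₁` and potential energy `E₂`,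
`d(E₁+E₂)/dt = − ∫_{ℝ²} g·w dx dy`. -/
theorem biot_energy_balance
    (ρ ρf ρw lam0 μ β m : ℝ) (hm : 0 < m)
    (us₁ us₂ W₁ W₂ : ℝ × ℝ × ℝ → ℝ)
    (hus₁ : ContDiff ℝ 2 us₁) (hus₂ : ContDiff ℝ 2 us₂)
    (hW₁ : ContDiff ℝ 2 W₁) (hW₂ : ContDiff ℝ 2 W₂)
    (K : Set (ℝ × ℝ)) (hK : IsCompact K)
    (hsupp : ∀ x y t : ℝ, (x, y) ∉ K →
      us₁ (x, y, t) = 0 ∧ us₂ (x, y, t) = 0 ∧ W₁ (x, y, t) = 0 ∧ W₂ (x, y, t) = 0)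
    (g₁ g₂ : ℝ × ℝ × ℝ → ℝ) (hg₁ : Continuous g₁) (hg₂ : Continuous g₂)
    -- velocities, strain, fluid content, pressure and stress
    (v₁ v₂ w₁ w₂ εxx εyy εxy trε ξ p σxx σyy σxy : ℝ × ℝ × ℝ → ℝ)
    (hv₁ : v₁ = pT us₁) (hv₂ : v₂ = pT us₂)
    (hw₁ : w₁ = pT W₁) (hw₂ : w₂ = pT W₂)
    (hεxx : εxx = pX us₁) (hεyy : εyy = pY us₂)
    (hεxy : εxy = fun q => (pY us₁ q + pX us₂ q) / 2)
    (htrε : trε = fun q => εxx q + εyy q)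
    (hξ : ξ = fun q => -(pX W₁ q + pY W₂ q))
    (hp : p = fun q => m * (-β * trε q + ξ q))
    (hσxx : σxx = fun q => lam0 * trε q + 2 * μ * εxx q - β * p q)
    (hσyy : σyy = fun q => lam0 * trε q + 2 * μ * εyy q - β * p q)
    (hσxy : σxy = fun q => 2 * μ * εxy q)
    -- conservation of momentum
    (hmom1x : ∀ q : ℝ × ℝ × ℝ, ρ * pT v₁ q + ρf * pT w₁ q = pX σxx q + pY σxy q)
    (hmom1y : ∀ q : ℝ × ℝ × ℝ, ρ * pT v₂ q + ρf * pT w₂ q = pX σxy q + pY σyy q)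
    (hmom2x : ∀ q : ℝ × ℝ × ℝ, ρf * pT v₁ q + ρw * pT w₁ q + g₁ q = -(pX p q))
    (hmom2y : ∀ q : ℝ × ℝ × ℝ, ρf * pT v₂ q + ρw * pT w₂ q + g₂ q = -(pY p q))
    -- kinetic and potential energies
    (E₁ E₂ : ℝ → ℝ)
    (hE₁ : E₁ = fun t => (1/2) * ∫ s : ℝ × ℝ,
      (ρ * (v₁ (s.1, s.2, t) ^ 2 + v₂ (s.1, s.2, t) ^ 2)
        + ρw * (w₁ (s.1, s.2, t) ^ 2 + w₂ (s.1, s.2, t) ^ 2)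
        + 2 * ρf * (v₁ (s.1, s.2, t) * w₁ (s.1, s.2, t) + v₂ (s.1, s.2, t) * w₂ (s.1, s.2, t))))
    (hE₂ : E₂ = fun t => (1/2) * ∫ s : ℝ × ℝ,
      (lam0 * trε (s.1, s.2, t) ^ 2
        + 2 * μ * (εxx (s.1, s.2, t) ^ 2 + 2 * εxy (s.1, s.2, t) ^ 2 + εyy (s.1, s.2, t) ^ 2)
        + p (s.1, s.2, t) ^ 2 / m)) :
    ∀ t : ℝ,
      HasDerivAt (fun τ => E₁ τ + E₂ τ)
        (-(∫ s : ℝ × ℝ,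
            (g₁ (s.1, s.2, t) * w₁ (s.1, s.2, t) + g₂ (s.1, s.2, t) * w₂ (s.1, s.2, t)))) t := by
  intro t
  simp only [hw₁, hw₂]
  -- flat forms of the constitutive quantities
  have hpB : p = biotP β m us₁ us₂ W₁ W₂ := by
    funext q; simp only [hp, htrε, hεxx, hεyy, hξ, biotP]
  have hSxxB : σxx = biotSxx lam0 μ β m us₁ us₂ W₁ W₂ := by
    funext q; simp only [hσxx, htrε, hεxx, hεyy, hpB, biotSxx]
  have hSyyB : σyy = biotSyy lam0 μ β m us₁ us₂ W₁ W₂ := by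
    funext q; simp only [hσyy, htrε, hεxx, hεyy, hpB, biotSyy]
  have hSxyB : σxy = biotSxy μ us₁ us₂ := by
    funext q; simp only [hσxy, hεxy, biotSxy]
  -- flat momentum equations
  have h1x : ∀ q : ℝ × ℝ × ℝ, ρ * pT (pT us₁) q + ρf * pT (pT W₁) q
      = pX (biotSxx lam0 μ β m us₁ us₂ W₁ W₂) q + pY (biotSxy μ us₁ us₂) q := by
    intro q; have h := hmom1x q; rwa [hv₁, hw₁, hSxxB, hSxyB] at h
  have h1y : ∀ q : ℝ × ℝ × ℝ, ρ * pT (pT us₂) q + ρf * pT (pT W₂) q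
      = pX (biotSxy μ us₁ us₂) q + pY (biotSyy lam0 μ β m us₁ us₂ W₁ W₂) q := by
    intro q; have h := hmom1y q; rwa [hv₂, hw₂, hSxyB, hSyyB] at h
  have h2x : ∀ q : ℝ × ℝ × ℝ, ρf * pT (pT us₁) q + ρw * pT (pT W₁) q + g₁ q
      = -(pX (biotP β m us₁ us₂ W₁ W₂) q) := by
    intro q; have h := hmom2x q; rwa [hv₁, hw₁, hpB] at h
  have h2y : ∀ q : ℝ × ℝ × ℝ, ρf * pT (pT us₂) q + ρw * pT (pT W₂) q + g₂ q
      = -(pY (biotP β m us₁ us₂ W₁ W₂) q) := by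
    intro q; have h := hmom2y q; rwa [hv₂, hw₂, hpB] at h
  -- vanishing of first derivatives off K
  have hz1 : ∀ x y τ : ℝ, (x, y) ∉ K → pT us₁ (x, y, τ) = 0 := fun x y τ h =>
    biot_vanish hK.isClosed (fun a b c hc => (hsupp a b c hc).1) h τ _
  have hz2 : ∀ x y τ : ℝ, (x, y) ∉ K → pT us₂ (x, y, τ) = 0 := fun x y τ h =>
    biot_vanish hK.isClosed (fun a b c hc => (hsupp a b c hc).2.1) h τ _
  have hz3 : ∀ x y τ : ℝ, (x, y) ∉ K → pT W₁ (x, y, τ) = 0 := fun x y τ h =>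
    biot_vanish hK.isClosed (fun a b c hc => (hsupp a b c hc).2.2.1) h τ _
  have hz4 : ∀ x y τ : ℝ, (x, y) ∉ K → pT W₂ (x, y, τ) = 0 := fun x y τ h =>
    biot_vanish hK.isClosed (fun a b c hc => (hsupp a b c hc).2.2.2) h τ _
  have hz5 : ∀ x y τ : ℝ, (x, y) ∉ K → pX us₁ (x, y, τ) = 0 := fun x y τ h =>
    biot_vanish hK.isClosed (fun a b c hc => (hsupp a b c hc).1) h τ _
  have hz6 : ∀ x y τ : ℝ, (x, y) ∉ K → pY us₁ (x, y, τ) = 0 := fun x y τ h =>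
    biot_vanish hK.isClosed (fun a b c hc => (hsupp a b c hc).1) h τ _
  have hz7 : ∀ x y τ : ℝ, (x, y) ∉ K → pX us₂ (x, y, τ) = 0 := fun x y τ h =>
    biot_vanish hK.isClosed (fun a b c hc => (hsupp a b c hc).2.1) h τ _
  have hz8 : ∀ x y τ : ℝ, (x, y) ∉ K → pY us₂ (x, y, τ) = 0 := fun x y τ h =>
    biot_vanish hK.isClosed (fun a b c hc => (hsupp a b c hc).2.1) h τ _
  have hz9 : ∀ x y τ : ℝ, (x, y) ∉ K → pX W₁ (x, y, τ) = 0 := fun x y τ h =>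
    biot_vanish hK.isClosed (fun a b c hc => (hsupp a b c hc).2.2.1) h τ _
  have hz10 : ∀ x y τ : ℝ, (x, y) ∉ K → pY W₂ (x, y, τ) = 0 := fun x y τ h =>
    biot_vanish hK.isClosed (fun a b c hc => (hsupp a b c hc).2.2.2) h τ _
  -- vanishing of the composite fields off K
  have hvP : ∀ x y τ : ℝ, (x, y) ∉ K → biotP β m us₁ us₂ W₁ W₂ (x, y, τ) = 0 := by
    intro x y τ h
    simp only [biotP, hz5 x y τ h, hz8 x y τ h, hz9 x y τ h, hz10 x y τ h]; ring
  have hvE : ∀ x y τ : ℝ, (x, y) ∉ K →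
      biotE ρ ρf ρw lam0 μ β m us₁ us₂ W₁ W₂ (x, y, τ) = 0 := by
    intro x y τ h
    simp only [biotE, hvP x y τ h, hz1 x y τ h, hz2 x y τ h, hz3 x y τ h, hz4 x y τ h,
      hz5 x y τ h, hz6 x y τ h, hz7 x y τ h, hz8 x y τ h]
    ring
  have hvPhi1 : ∀ x y τ : ℝ, (x, y) ∉ K →
      biotPhi1 lam0 μ β m us₁ us₂ W₁ W₂ (x, y, τ) = 0 := by
    intro x y τ h
    simp only [biotPhi1, hz1 x y τ h, hz2 x y τ h, hz3 x y τ h]; ring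
  have hvPhi2 : ∀ x y τ : ℝ, (x, y) ∉ K →
      biotPhi2 lam0 μ β m us₁ us₂ W₁ W₂ (x, y, τ) = 0 := by
    intro x y τ h
    simp only [biotPhi2, hz1 x y τ h, hz2 x y τ h, hz4 x y τ h]; ring
  -- the pointwise energy identity
  have hkey : ∀ q : ℝ × ℝ × ℝ, pT (biotE ρ ρf ρw lam0 μ β m us₁ us₂ W₁ W₂) q
      = pX (biotPhi1 lam0 μ β m us₁ us₂ W₁ W₂) q + pY (biotPhi2 lam0 μ β m us₁ us₂ W₁ W₂) q
        - (g₁ q * pT W₁ q + g₂ q * pT W₂ q) := by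
    intro q
    rw [biotE_pT hus₁ hus₂ hW₁ hW₂ hm.ne' q, biotPhi1_pX hus₁ hus₂ hW₁ hW₂ q,
      biotPhi2_pY hus₁ hus₂ hW₁ hW₂ q]
    have e1 := h1x q
    have e2 := h1y q
    have e3 := h2x q
    have e4 := h2y q
    simp only [biotSxx, biotSyy, biotSxy, biotP] at e1 e2 e3 e4 ⊢
    linear_combination pT us₁ q * e1 + pT us₂ q * e2 + pT W₁ q * e3 + pT W₂ q * e4
  -- rewrite `E₁ + E₂` as a single integral
  have hfun : (fun τ => E₁ τ + E₂ τ)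
      = fun τ => ∫ s : ℝ × ℝ, biotE ρ ρf ρw lam0 μ β m us₁ us₂ W₁ W₂ (s.1, s.2, τ) := by
    funext τ
    rw [hE₁, hE₂]
    simp only [hv₁, hv₂, hw₁, hw₂, htrε, hεxx, hεyy, hεxy, hpB]
    have hintA : Integrable (fun s : ℝ × ℝ =>
        ρ * (pT us₁ (s.1, s.2, τ) ^ 2 + pT us₂ (s.1, s.2, τ) ^ 2)
        + ρw * (pT W₁ (s.1, s.2, τ) ^ 2 + pT W₂ (s.1, s.2, τ) ^ 2)
        + 2 * ρf * (pT us₁ (s.1, s.2, τ) * pT W₁ (s.1, s.2, τ)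
            + pT us₂ (s.1, s.2, τ) * pT W₂ (s.1, s.2, τ))) := by
      apply biot_integrable_slice hK (F := fun q => ρ * (pT us₁ q ^ 2 + pT us₂ q ^ 2)
        + ρw * (pT W₁ q ^ 2 + pT W₂ q ^ 2)
        + 2 * ρf * (pT us₁ q * pT W₁ q + pT us₂ q * pT W₂ q))
      · have c1 := (biot_contDiff_pT hus₁).continuous
        have c2 := (biot_contDiff_pT hus₂).continuous
        have c3 := (biot_contDiff_pT hW₁).continuous
        have c4 := (biot_contDiff_pT hW₂).continuous
        fun_prop
      · intro x y τ' h
        simp only [hz1 x y τ' h, hz2 x y τ' h, hz3 x y τ' h, hz4 x y τ' h]; ring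
    have hintB : Integrable (fun s : ℝ × ℝ =>
        lam0 * (pX us₁ (s.1, s.2, τ) + pY us₂ (s.1, s.2, τ)) ^ 2
        + 2 * μ * (pX us₁ (s.1, s.2, τ) ^ 2
            + 2 * ((pY us₁ (s.1, s.2, τ) + pX us₂ (s.1, s.2, τ)) / 2) ^ 2
            + pY us₂ (s.1, s.2, τ) ^ 2)
        + biotP β m us₁ us₂ W₁ W₂ (s.1, s.2, τ) ^ 2 / m) := by
      apply biot_integrable_slice hK (F := fun q => lam0 * (pX us₁ q + pY us₂ q) ^ 2
        + 2 * μ * (pX us₁ q ^ 2 + 2 * ((pY us₁ q + pX us₂ q) / 2) ^ 2 + pY us₂ q ^ 2)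
        + biotP β m us₁ us₂ W₁ W₂ q ^ 2 / m)
      · have c1 := (biot_contDiff_pX hus₁).continuous
        have c2 := (biot_contDiff_pY hus₂).continuous
        have c3 := (biot_contDiff_pY hus₁).continuous
        have c4 := (biot_contDiff_pX hus₂).continuous
        have c5 := (biotP_contDiff hus₁ hus₂ hW₁ hW₂ (β := β) (m := m)).continuous
        fun_prop
      · intro x y τ' h
        simp only [hvP x y τ' h, hz5 x y τ' h, hz6 x y τ' h, hz7 x y τ' h, hz8 x y τ' h]
        ring
    rw [← integral_const_mul, ← integral_const_mul,
      ← integral_add (hintA.const_mul (1/2 : ℝ)) (hintB.const_mul (1/2 : ℝ))]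
    exact integral_congr_ae (Filter.Eventually.of_forall fun s => rfl)
  rw [hfun]
  -- the value of the derivative
  have hΦ1cd := biotPhi1_contDiff hus₁ hus₂ hW₁ hW₂ (lam0 := lam0) (μ := μ) (β := β) (m := m)
  have hΦ2cd := biotPhi2_contDiff hus₁ hus₂ hW₁ hW₂ (lam0 := lam0) (μ := μ) (β := β) (m := m)
  have hcT1 := (biot_contDiff_pT hW₁).continuous
  have hcT2 := (biot_contDiff_pT hW₂).continuous
  have hval : (∫ s : ℝ × ℝ, pT (biotE ρ ρf ρw lam0 μ β m us₁ us₂ W₁ W₂) (s.1, s.2, t))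
      = -(∫ s : ℝ × ℝ, (g₁ (s.1, s.2, t) * pT W₁ (s.1, s.2, t)
          + g₂ (s.1, s.2, t) * pT W₂ (s.1, s.2, t))) := by
    have hintX : Integrable (fun s : ℝ × ℝ =>
        pX (biotPhi1 lam0 μ β m us₁ us₂ W₁ W₂) (s.1, s.2, t)) :=
      biot_integrable_slice hK (biot_cont1_pX hΦ1cd)
        (fun x y τ h => biot_vanish hK.isClosed hvPhi1 h τ _) t
    have hintY : Integrable (fun s : ℝ × ℝ =>
        pY (biotPhi2 lam0 μ β m us₁ us₂ W₁ W₂) (s.1, s.2, t)) :=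
      biot_integrable_slice hK (biot_cont1_pY hΦ2cd)
        (fun x y τ h => biot_vanish hK.isClosed hvPhi2 h τ _) t
    have hintG : Integrable (fun s : ℝ × ℝ =>
        g₁ (s.1, s.2, t) * pT W₁ (s.1, s.2, t) + g₂ (s.1, s.2, t) * pT W₂ (s.1, s.2, t)) := by
      apply biot_integrable_slice hK (F := fun q => g₁ q * pT W₁ q + g₂ q * pT W₂ q)
        ((hg₁.mul hcT1).add (hg₂.mul hcT2))
      intro x y τ h
      simp only [hz3 x y τ h, hz4 x y τ h, mul_zero, add_zero]
    calc (∫ s : ℝ × ℝ, pT (biotE ρ ρf ρw lam0 μ β m us₁ us₂ W₁ W₂) (s.1, s.2, t))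
        = ∫ s : ℝ × ℝ, (pX (biotPhi1 lam0 μ β m us₁ us₂ W₁ W₂) (s.1, s.2, t)
            + pY (biotPhi2 lam0 μ β m us₁ us₂ W₁ W₂) (s.1, s.2, t)
            - (g₁ (s.1, s.2, t) * pT W₁ (s.1, s.2, t)
              + g₂ (s.1, s.2, t) * pT W₂ (s.1, s.2, t))) :=
          integral_congr_ae (Filter.Eventually.of_forall fun s => hkey (s.1, s.2, t))
      _ = (∫ s : ℝ × ℝ, pX (biotPhi1 lam0 μ β m us₁ us₂ W₁ W₂) (s.1, s.2, t))
            + (∫ s : ℝ × ℝ, pY (biotPhi2 lam0 μ β m us₁ us₂ W₁ W₂) (s.1, s.2, t))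
            - ∫ s : ℝ × ℝ, (g₁ (s.1, s.2, t) * pT W₁ (s.1, s.2, t)
              + g₂ (s.1, s.2, t) * pT W₂ (s.1, s.2, t)) := by
          have hintXY : Integrable (fun s : ℝ × ℝ =>
              pX (biotPhi1 lam0 μ β m us₁ us₂ W₁ W₂) (s.1, s.2, t)
              + pY (biotPhi2 lam0 μ β m us₁ us₂ W₁ W₂) (s.1, s.2, t)) := hintX.add hintY
          rw [integral_sub hintXY hintG, integral_add hintX hintY]
      _ = -(∫ s : ℝ × ℝ, (g₁ (s.1, s.2, t) * pT W₁ (s.1, s.2, t)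
            + g₂ (s.1, s.2, t) * pT W₂ (s.1, s.2, t))) := by
          rw [biot_div_zero_X hK hΦ1cd hvPhi1 t, biot_div_zero_Y hK hΦ2cd hvPhi2 t]
          ring
  rw [← hval]
  exact biot_param hK (biotE_contDiff hus₁ hus₂ hW₁ hW₂ hm.ne') hvE t
end

section
/- (Energy decay for the Biot-JKD model.) Let η > 0, κ > 0, Ω > 0, m > 0 and ρ, ρ_f, ρ_w, λ₀, μ, β ∈ ℝ. Let u_s, W : ℝ² × ℝ → ℝ² be C² fields compactly supported in space for each time, set v_s = ∂u_s/∂t, w = ∂W/∂t, ε = (∇u_s + ∇u_sᵀ)/2, ξ = −div W, p = m(−β tr ε + ξ), σ = λ₀(tr ε) I + 2με − βpI, and let ψ : ℝ² × (0,∞) × ℝ → ℝ², (x, y, θ, t) ↦ ψ(θ), be C¹ in t with ∂ψ(θ)/∂t = −(θ + Ω)ψ(θ) + ∂w/∂t + Ω w for every θ > 0. Assume the fields satisfy ρ ∂v_s/∂t + ρ_f ∂w/∂t = div σ and ρ_f ∂v_s/∂t + ρ_w ∂w/∂t + (η/κ)(1/√Ω)(1/π) ∫₀^∞ θ^{−1/2}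 ψ(θ) dθ = −∇p, and assume all the θ-integrals below converge and differentiation under the integral sign is justified. Define E = E₁ + E₂ + E₃ with E₁ = (1/2)∫_{ℝ²}(ρ|v_s|² + ρ_w|w|² + 2ρ_f v_s·w) dx dy, E₂ = (1/2)∫_{ℝ²}(λ₀(tr ε)² + 2με:ε + p²/m) dx dy, and E₃ = (1/2)∫_{ℝ²}∫₀^∞ (η/κ)(1/π)(1/√(Ωθ))(1/(θ + 2Ω)) |w − ψ(θ)|² dθ dx dy. Then dE/dt = − ∫_{ℝ²}∫₀^∞ (η/κ)(1/π)(1/√(Ωθ))(1/(θ + 2Ω)) ( Ω|w|² + (θ + Ω)|ψ(θ)|² ) dθ dx dy ≤ 0. -/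
open MeasureTheory Real

lemma pd_add {f g : ℝ×ℝ×ℝ → ℝ} {q v : ℝ×ℝ×ℝ} (hf : DifferentiableAt ℝ f q) (hg : DifferentiableAt ℝ g q) :
    fderiv ℝ (fun x => f x + g x) q v = fderiv ℝ f q v + fderiv ℝ g q v := by
  rw [fderiv_fun_add hf hg]; rfl

lemma pd_mul {f g : ℝ×ℝ×ℝ → ℝ} {q v : ℝ×ℝ×ℝ} (hf : DifferentiableAt ℝ f q) (hg : DifferentiableAt ℝ g q) :
    fderiv ℝ (fun x => f x * g x) q v = fderiv ℝ f q v * g q + f q * fderiv ℝ g q v := by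
  rw [fderiv_fun_mul hf hg]
  simp only [ContinuousLinearMap.add_apply, ContinuousLinearMap.smul_apply, smul_eq_mul]
  ring

lemma pd_neg {f : ℝ×ℝ×ℝ → ℝ} {q v : ℝ×ℝ×ℝ} :
    fderiv ℝ (fun x => -f x) q v = -(fderiv ℝ f q v) := by
  rw [fderiv_fun_neg]; rfl

lemma pd_const_mul {f : ℝ×ℝ×ℝ → ℝ} {q v : ℝ×ℝ×ℝ} (c : ℝ) (hf : DifferentiableAt ℝ f q) :
    fderiv ℝ (fun x => c * f x) q v = c * fderiv ℝ f q v := by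
  rw [fderiv_const_mul hf]; rfl

lemma cd1 {f : ℝ×ℝ×ℝ → ℝ} (hf : ContDiff ℝ 2 f) (v : ℝ×ℝ×ℝ) :
    ContDiff ℝ 1 fun q => fderiv ℝ f q v :=
  (hf.fderiv_right (by norm_num : (1:WithTop ℕ∞) + 1 ≤ 2)).clm_apply contDiff_const

lemma pd_symm {f : ℝ×ℝ×ℝ → ℝ} (hf : ContDiff ℝ 2 f) (a b q : ℝ×ℝ×ℝ) :
    fderiv ℝ (fun x => fderiv ℝ f x a) q b = fderiv ℝ (fun x => fderiv ℝ f x b) q a := by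
  have hd : DifferentiableAt ℝ (fderiv ℝ f) q :=
    ((hf.fderiv_right (by norm_num : (1:WithTop ℕ∞) + 1 ≤ 2)).differentiable one_ne_zero).differentiableAt
  have h1 : ∀ c : ℝ×ℝ×ℝ, HasFDerivAt (fun x => fderiv ℝ f x c)
      ((ContinuousLinearMap.apply ℝ ℝ c).comp (fderiv ℝ (fderiv ℝ f) q)) q :=
    fun c => ((ContinuousLinearMap.apply ℝ ℝ c).hasFDerivAt).comp q hd.hasFDerivAt
  rw [(h1 a).fderiv, (h1 b).fderiv]
  exact second_derivative_symmetric (fun y => (hf.differentiable two_ne_zero y).hasFDerivAt)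
    hd.hasFDerivAt b a

lemma fderiv_zero_of_zero_on_open {E F : Type*} [NormedAddCommGroup E] [NormedSpace ℝ E]
    [NormedAddCommGroup F] [NormedSpace ℝ F]
    {f : E → F} {U : Set E} (hU : IsOpen U) {q : E} (hq : q ∈ U)
    (h0 : ∀ x ∈ U, f x = 0) : fderiv ℝ f q = 0 := by
  have h : f =ᶠ[nhds q] (fun _ => (0:F)) := Filter.eventuallyEq_of_mem (hU.mem_nhds hq) h0
  rw [h.fderiv_eq]
  exact fderiv_const_apply 0

lemma pd_sub {f g : ℝ×ℝ×ℝ → ℝ} {q v : ℝ×ℝ×ℝ} (hf : DifferentiableAt ℝ f q) (hg : DifferentiableAt ℝ g q) :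
    fderiv ℝ (fun x => f x - g x) q v = fderiv ℝ f q v - fderiv ℝ g q v := by
  rw [fderiv_fun_sub hf hg]; rfl

lemma pT_add {f g : ℝ×ℝ×ℝ → ℝ} {q : ℝ×ℝ×ℝ} (hf : DifferentiableAt ℝ f q) (hg : DifferentiableAt ℝ g q) :
    pT (fun x => f x + g x) q = pT f q + pT g q := pd_add hf hg

lemma pT_neg {f : ℝ×ℝ×ℝ → ℝ} {q : ℝ×ℝ×ℝ} : pT (fun x => -f x) q = -(pT f q) := pd_neg

lemma pT_const_mul {f : ℝ×ℝ×ℝ → ℝ} {q : ℝ×ℝ×ℝ} (c : ℝ) (hf : DifferentiableAt ℝ f q) :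
    pT (fun x => c * f x) q = c * pT f q := pd_const_mul c hf

lemma pT_div_const {f : ℝ×ℝ×ℝ → ℝ} {q : ℝ×ℝ×ℝ} (hf : DifferentiableAt ℝ f q) (c : ℝ) :
    pT (fun x => f x / c) q = pT f q / c := by
  show fderiv ℝ (fun x => f x / c) q (0,0,1) = fderiv ℝ f q (0,0,1) / c
  simp only [div_eq_mul_inv]
  rw [fderiv_mul_const hf]
  simp [mul_comm]

lemma pX_add {f g : ℝ×ℝ×ℝ → ℝ} {q : ℝ×ℝ×ℝ} (hf : DifferentiableAt ℝ f q) (hg : DifferentiableAt ℝ g q) :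
    pX (fun x => f x + g x) q = pX f q + pX g q := pd_add hf hg

lemma pX_sub {f g : ℝ×ℝ×ℝ → ℝ} {q : ℝ×ℝ×ℝ} (hf : DifferentiableAt ℝ f q) (hg : DifferentiableAt ℝ g q) :
    pX (fun x => f x - g x) q = pX f q - pX g q := pd_sub hf hg

lemma pX_mul {f g : ℝ×ℝ×ℝ → ℝ} {q : ℝ×ℝ×ℝ} (hf : DifferentiableAt ℝ f q) (hg : DifferentiableAt ℝ g q) :
    pX (fun x => f x * g x) q = pX f q * g q + f q * pX g q := pd_mul hf hg

lemma pY_add {f g : ℝ×ℝ×ℝ → ℝ} {q : ℝ×ℝ×ℝ} (hf : DifferentiableAt ℝ f q) (hg : DifferentiableAt ℝ g q) :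
    pY (fun x => f x + g x) q = pY f q + pY g q := pd_add hf hg

lemma pY_sub {f g : ℝ×ℝ×ℝ → ℝ} {q : ℝ×ℝ×ℝ} (hf : DifferentiableAt ℝ f q) (hg : DifferentiableAt ℝ g q) :
    pY (fun x => f x - g x) q = pY f q - pY g q := pd_sub hf hg

lemma pY_mul {f g : ℝ×ℝ×ℝ → ℝ} {q : ℝ×ℝ×ℝ} (hf : DifferentiableAt ℝ f q) (hg : DifferentiableAt ℝ g q) :
    pY (fun x => f x * g x) q = pY f q * g q + f q * pY g q := pd_mul hf hg

lemma schwarz_XT {f : ℝ×ℝ×ℝ → ℝ} (hf : ContDiff ℝ 2 f) (q : ℝ×ℝ×ℝ) :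
    pT (pX f) q = pX (pT f) q := pd_symm hf (1,0,0) (0,0,1) q

lemma schwarz_YT {f : ℝ×ℝ×ℝ → ℝ} (hf : ContDiff ℝ 2 f) (q : ℝ×ℝ×ℝ) :
    pT (pY f) q = pY (pT f) q := pd_symm hf (0,1,0) (0,0,1) q


lemma div_integral_zero (f g : ℝ×ℝ → ℝ) (f' g' : ℝ×ℝ → (ℝ×ℝ) →L[ℝ] ℝ)
    (hf : ∀ s, HasFDerivAt f (f' s) s) (hg : ∀ s, HasFDerivAt g (g' s) s)
    (hcont : Continuous fun s => f' s (1,0) + g' s (0,1))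
    (K : Set (ℝ×ℝ)) (hK : IsCompact K)
    (hf0 : ∀ s ∉ K, f s = 0) (hg0 : ∀ s ∉ K, g s = 0) :
    ∫ s : ℝ×ℝ, (f' s (1,0) + g' s (0,1)) = 0 := by
  obtain ⟨C, hC⟩ := hK.isBounded.exists_norm_le
  set r : ℝ := max C 0 + 1 with hr
  have hrpos : 0 < r := by positivity
  have hbound : ∀ s ∈ K, |s.1| < r ∧ |s.2| < r := by
    intro s hs
    have h1 : ‖s.1‖ ≤ ‖s‖ := norm_fst_le s
    have h2 : ‖s.2‖ ≤ ‖s‖ := norm_snd_le s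
    have := hC s hs
    constructor
    · rw [← Real.norm_eq_abs]; calc ‖s.1‖ ≤ C := h1.trans this
        _ ≤ max C 0 := le_max_left _ _
        _ < r := by rw [hr]; linarith
    · rw [← Real.norm_eq_abs]; calc ‖s.2‖ ≤ C := h2.trans this
        _ ≤ max C 0 := le_max_left _ _
        _ < r := by rw [hr]; linarith
  set a : ℝ×ℝ := (-r, -r) with ha
  set b : ℝ×ℝ := (r, r) with hb
  have hle : a ≤ b := by constructor <;> simp [ha, hb] <;> linarith
  have hKIcc : K ⊆ Set.Icc a b := by
    intro s hs
    obtain ⟨h1, h2⟩ := hbound s hs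
    have h1' := abs_le.mp h1.le
    have h2' := abs_le.mp h2.le
    refine ⟨⟨?_, ?_⟩, ?_, ?_⟩ <;> simp only [ha, hb] <;> linarith [h1'.1, h1'.2, h2'.1, h2'.2]
  have hf'0 : ∀ s ∉ K, f' s = 0 := by
    intro s hs
    rw [← (hf s).fderiv]
    exact fderiv_zero_of_zero_on_open hK.isClosed.isOpen_compl hs (fun x hx => hf0 x hx)
  have hg'0 : ∀ s ∉ K, g' s = 0 := by
    intro s hs
    rw [← (hg s).fderiv]
    exact fderiv_zero_of_zero_on_open hK.isClosed.isOpen_compl hs (fun x hx => hg0 x hx)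
  have hint0 : ∀ s ∉ Set.Icc a b, f' s (1,0) + g' s (0,1) = 0 := by
    intro s hs
    have hsK : s ∉ K := fun h => hs (hKIcc h)
    rw [hf'0 s hsK, hg'0 s hsK]; simp
  rw [← setIntegral_eq_integral_of_forall_compl_eq_zero hint0]
  have hdiv := integral_divergence_prod_Icc_of_hasFDerivAt_off_countable_of_le f g f' g'
    a b hle ∅ Set.countable_empty
    (fun s _ => (hf s).continuousAt.continuousWithinAt)
    (fun s _ => (hg s).continuousAt.continuousWithinAt)
    (fun x _ => hf x) (fun x _ => hg x)
    (hcont.continuousOn.integrableOn_compact isCompact_Icc)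
  rw [hdiv]
  have hedge : ∀ x y : ℝ, (|x| = r ∨ |y| = r) → f (x,y) = 0 ∧ g (x,y) = 0 := by
    intro x y hxy
    have : (x,y) ∉ K := by
      intro hmem
      obtain ⟨h1, h2⟩ := hbound _ hmem
      rcases hxy with h | h <;> simp_all <;> linarith
    exact ⟨hf0 _ this, hg0 _ this⟩
  have e1 : (∫ x in a.1..b.1, g (x, b.2)) = 0 := by
    rw [intervalIntegral.integral_congr (g := fun _ => (0:ℝ)) (fun x _ => (hedge x b.2 (Or.inr (by simp [hb, abs_of_pos hrpos]))).2)]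
    simp
  have e2 : (∫ x in a.1..b.1, g (x, a.2)) = 0 := by
    rw [intervalIntegral.integral_congr (g := fun _ => (0:ℝ)) (fun x _ => (hedge x a.2 (Or.inr (by simp [ha, abs_of_pos hrpos]))).2)]
    simp
  have e3 : (∫ y in a.2..b.2, f (b.1, y)) = 0 := by
    rw [intervalIntegral.integral_congr (g := fun _ => (0:ℝ)) (fun y _ => (hedge b.1 y (Or.inl (by simp [hb, abs_of_pos hrpos]))).1)]
    simp
  have e4 : (∫ y in a.2..b.2, f (a.1, y)) = 0 := by
    rw [intervalIntegral.integral_congr (g := fun _ => (0:ℝ)) (fun y _ => (hedge a.1 y (Or.inl (by simp [ha, abs_of_pos hrpos]))).1)]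
    simp
  rw [e1, e2, e3, e4]; ring

/-- Energy decay for the 2D Biot-JKD model, with the viscous dissipation written
through its diffusive representation: `dE/dt = −D(t) ≤ 0` where `E = E₁+E₂+E₃` and
`D(t) = ∫_{ℝ²}∫₀^∞ (η/κ)(1/π)(1/√(Ωθ))(1/(θ+2Ω)) (Ω|w|² + (θ+Ω)|ψ(θ)|²) dθ dx dy`. -/
theorem biot_jkd_energy_decay
    (η κ Ω m : ℝ) (hη : 0 < η) (hκ : 0 < κ) (hΩ : 0 < Ω) (hm : 0 < m)
    (ρ ρf ρw lam0 μ β : ℝ)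
    (us₁ us₂ W₁ W₂ : ℝ × ℝ × ℝ → ℝ)
    (hus₁ : ContDiff ℝ 2 us₁) (hus₂ : ContDiff ℝ 2 us₂)
    (hW₁ : ContDiff ℝ 2 W₁) (hW₂ : ContDiff ℝ 2 W₂)
    (K : Set (ℝ × ℝ)) (hK : IsCompact K)
    (hsupp : ∀ x y t : ℝ, (x, y) ∉ K →
      us₁ (x, y, t) = 0 ∧ us₂ (x, y, t) = 0 ∧ W₁ (x, y, t) = 0 ∧ W₂ (x, y, t) = 0)
    -- velocities, strain, fluid content, pressure and stress
    (v₁ v₂ w₁ w₂ εxx εyy εxy trε ξ p σxx σyy σxy : ℝ × ℝ × ℝ → ℝ)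
    (hv₁ : v₁ = pT us₁) (hv₂ : v₂ = pT us₂)
    (hw₁ : w₁ = pT W₁) (hw₂ : w₂ = pT W₂)
    (hεxx : εxx = pX us₁) (hεyy : εyy = pY us₂)
    (hεxy : εxy = fun q => (pY us₁ q + pX us₂ q) / 2)
    (htrε : trε = fun q => εxx q + εyy q)
    (hξ : ξ = fun q => -(pX W₁ q + pY W₂ q))
    (hp : p = fun q => m * (-β * trε q + ξ q))
    (hσxx : σxx = fun q => lam0 * trε q + 2 * μ * εxx q - β * p q)
    (hσyy : σyy = fun q => lam0 * trε q + 2 * μ * εyy q - β * p q)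
    (hσxy : σxy = fun q => 2 * μ * εxy q)
    -- diffusive variables ψ(x, y, θ, t), C¹ in time, satisfying the local ODE
    (ψ₁ ψ₂ : ℝ × ℝ → ℝ → ℝ → ℝ)
    (hode₁ : ∀ (s : ℝ × ℝ) (θ t : ℝ), 0 < θ →
      HasDerivAt (fun τ => ψ₁ s θ τ)
        (-(θ + Ω) * ψ₁ s θ t + pT w₁ (s.1, s.2, t) + Ω * w₁ (s.1, s.2, t)) t)
    (hode₂ : ∀ (s : ℝ × ℝ) (θ t : ℝ), 0 < θ →
      HasDerivAt (fun τ => ψ₂ s θ τ)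
        (-(θ + Ω) * ψ₂ s θ t + pT w₂ (s.1, s.2, t) + Ω * w₂ (s.1, s.2, t)) t)
    -- conservation of momentum, with the diffusive representation of the dissipation
    (hmom1x : ∀ q : ℝ × ℝ × ℝ, ρ * pT v₁ q + ρf * pT w₁ q = pX σxx q + pY σxy q)
    (hmom1y : ∀ q : ℝ × ℝ × ℝ, ρ * pT v₂ q + ρf * pT w₂ q = pX σxy q + pY σyy q)
    (hmom2x : ∀ (s : ℝ × ℝ) (t : ℝ),
      ρf * pT v₁ (s.1, s.2, t) + ρw * pT w₁ (s.1, s.2, t) +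
        (η / κ) * (1 / Real.sqrt Ω) * (1 / π) *
          (∫ θ in Set.Ioi (0 : ℝ), θ ^ (-(1/2 : ℝ)) * ψ₁ s θ t)
        = -(pX p (s.1, s.2, t)))
    (hmom2y : ∀ (s : ℝ × ℝ) (t : ℝ),
      ρf * pT v₂ (s.1, s.2, t) + ρw * pT w₂ (s.1, s.2, t) +
        (η / κ) * (1 / Real.sqrt Ω) * (1 / π) *
          (∫ θ in Set.Ioi (0 : ℝ), θ ^ (-(1/2 : ℝ)) * ψ₂ s θ t)
        = -(pY p (s.1, s.2, t)))
    -- the weight of the θ-integrals in E₃ and in the dissipation rate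
    (c : ℝ → ℝ)
    (hc : c = fun θ => (η / κ) * (1 / π) * (1 / Real.sqrt (Ω * θ)) * (1 / (θ + 2 * Ω)))
    -- the energies
    (E₁ E₂ E₃ E : ℝ → ℝ)
    (hE₁ : E₁ = fun t => (1/2) * ∫ s : ℝ × ℝ,
      (ρ * (v₁ (s.1, s.2, t) ^ 2 + v₂ (s.1, s.2, t) ^ 2)
        + ρw * (w₁ (s.1, s.2, t) ^ 2 + w₂ (s.1, s.2, t) ^ 2)
        + 2 * ρf * (v₁ (s.1, s.2, t) * w₁ (s.1, s.2, t) + v₂ (s.1, s.2, t) * w₂ (s.1, s.2, t))))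
    (hE₂ : E₂ = fun t => (1/2) * ∫ s : ℝ × ℝ,
      (lam0 * trε (s.1, s.2, t) ^ 2
        + 2 * μ * (εxx (s.1, s.2, t) ^ 2 + 2 * εxy (s.1, s.2, t) ^ 2 + εyy (s.1, s.2, t) ^ 2)
        + p (s.1, s.2, t) ^ 2 / m))
    (hE₃ : E₃ = fun t => (1/2) * ∫ s : ℝ × ℝ, ∫ θ in Set.Ioi (0 : ℝ),
      c θ * ((w₁ (s.1, s.2, t) - ψ₁ s θ t) ^ 2 + (w₂ (s.1, s.2, t) - ψ₂ s θ t) ^ 2))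
    (hE : E = fun t => E₁ t + E₂ t + E₃ t)
    -- convergence of the θ-integrals
    (hintψ : ∀ (s : ℝ × ℝ) (t : ℝ),
      IntegrableOn (fun θ => θ ^ (-(1/2 : ℝ)) * ψ₁ s θ t) (Set.Ioi 0) volume ∧
      IntegrableOn (fun θ => θ ^ (-(1/2 : ℝ)) * ψ₂ s θ t) (Set.Ioi 0) volume)
    (hintE₃ : ∀ (s : ℝ × ℝ) (t : ℝ),
      IntegrableOn (fun θ =>
        c θ * ((w₁ (s.1, s.2, t) - ψ₁ s θ t) ^ 2 + (w₂ (s.1, s.2, t) - ψ₂ s θ t) ^ 2))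
        (Set.Ioi 0) volume)
    (hintdE₃ : ∀ (s : ℝ × ℝ) (t : ℝ),
      IntegrableOn (fun θ =>
        c θ * ((w₁ (s.1, s.2, t) - ψ₁ s θ t) * (pT w₁ (s.1, s.2, t) - deriv (ψ₁ s θ) t)
          + (w₂ (s.1, s.2, t) - ψ₂ s θ t) * (pT w₂ (s.1, s.2, t) - deriv (ψ₂ s θ) t)))
        (Set.Ioi 0) volume)
    (hintD : ∀ (s : ℝ × ℝ) (t : ℝ),
      IntegrableOn (fun θ =>
        c θ * (Ω * (w₁ (s.1, s.2, t) ^ 2 + w₂ (s.1, s.2, t) ^ 2)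
          + (θ + Ω) * (ψ₁ s θ t ^ 2 + ψ₂ s θ t ^ 2))) (Set.Ioi 0) volume)
    -- differentiation under the integral sign is justified
    (hswap : ∀ t : ℝ,
      HasDerivAt E
        (∫ s : ℝ × ℝ,
          ((ρ * (v₁ (s.1, s.2, t) * pT v₁ (s.1, s.2, t) + v₂ (s.1, s.2, t) * pT v₂ (s.1, s.2, t))
            + ρw * (w₁ (s.1, s.2, t) * pT w₁ (s.1, s.2, t) + w₂ (s.1, s.2, t) * pT w₂ (s.1, s.2, t))
            + ρf * (pT v₁ (s.1, s.2, t) * w₁ (s.1, s.2, t) + v₁ (s.1, s.2, t) * pT w₁ (s.1, s.2, t)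
              + pT v₂ (s.1, s.2, t) * w₂ (s.1, s.2, t) + v₂ (s.1, s.2, t) * pT w₂ (s.1, s.2, t)))
          + (lam0 * trε (s.1, s.2, t) * pT trε (s.1, s.2, t)
            + 2 * μ * (εxx (s.1, s.2, t) * pT εxx (s.1, s.2, t)
              + 2 * εxy (s.1, s.2, t) * pT εxy (s.1, s.2, t)
              + εyy (s.1, s.2, t) * pT εyy (s.1, s.2, t))
            + p (s.1, s.2, t) * pT p (s.1, s.2, t) / m)
          + ∫ θ in Set.Ioi (0 : ℝ),
              c θ * ((w₁ (s.1, s.2, t) - ψ₁ s θ t) * (pT w₁ (s.1, s.2, t) - deriv (ψ₁ s θ) t)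
                + (w₂ (s.1, s.2, t) - ψ₂ s θ t) * (pT w₂ (s.1, s.2, t) - deriv (ψ₂ s θ) t)))) t)
    -- the dissipation rate
    (D : ℝ → ℝ)
    (hD : D = fun t => ∫ s : ℝ × ℝ, ∫ θ in Set.Ioi (0 : ℝ),
      c θ * (Ω * (w₁ (s.1, s.2, t) ^ 2 + w₂ (s.1, s.2, t) ^ 2)
        + (θ + Ω) * (ψ₁ s θ t ^ 2 + ψ₂ s θ t ^ 2))) :
    ∀ t : ℝ, HasDerivAt E (-(D t)) t ∧ -(D t) ≤ 0 := by
  intro t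
  -- nonnegativity of D t
  have hcpos : ∀ θ : ℝ, 0 < θ → 0 ≤ c θ := by
    intro θ hθ
    rw [hc]
    have h1 : (0:ℝ) < θ + 2 * Ω := by linarith
    have h2 : (0:ℝ) ≤ 1 / Real.sqrt (Ω * θ) := by positivity
    have h3 : (0:ℝ) ≤ 1 / (θ + 2 * Ω) := by positivity
    have h4 : (0:ℝ) ≤ η / κ := by positivity
    have h5 : (0:ℝ) ≤ 1 / π := by positivity
    exact mul_nonneg (mul_nonneg (mul_nonneg h4 h5) h2) h3
  have hDnonneg : 0 ≤ D t := by
    rw [hD]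
    apply integral_nonneg
    intro s
    apply setIntegral_nonneg measurableSet_Ioi
    intro θ hθ
    have hθ0 : (0:ℝ) < θ := hθ
    apply mul_nonneg (hcpos θ hθ0)
    have h1 : (0:ℝ) ≤ Ω * (w₁ (s.1, s.2, t) ^ 2 + w₂ (s.1, s.2, t) ^ 2) := by positivity
    have h2 : (0:ℝ) ≤ (θ + Ω) * (ψ₁ s θ t ^ 2 + ψ₂ s θ t ^ 2) := by
      apply mul_nonneg (by linarith) (by positivity)
    linarith
  refine ⟨?_, by linarith⟩
  -- smoothness of the basic fields
  have hv₁' : ContDiff ℝ 1 v₁ := by rw [hv₁]; exact cd1 hus₁ _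
  have hv₂' : ContDiff ℝ 1 v₂ := by rw [hv₂]; exact cd1 hus₂ _
  have hw₁' : ContDiff ℝ 1 w₁ := by rw [hw₁]; exact cd1 hW₁ _
  have hw₂' : ContDiff ℝ 1 w₂ := by rw [hw₂]; exact cd1 hW₂ _
  have hεxx' : ContDiff ℝ 1 εxx := by rw [hεxx]; exact cd1 hus₁ _
  have hεyy' : ContDiff ℝ 1 εyy := by rw [hεyy]; exact cd1 hus₂ _
  have hεxy' : ContDiff ℝ 1 εxy := by
    rw [hεxy]; exact ((cd1 hus₁ _).add (cd1 hus₂ _)).div_const 2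
  have htrε' : ContDiff ℝ 1 trε := by rw [htrε]; exact hεxx'.add hεyy'
  have hξ' : ContDiff ℝ 1 ξ := by rw [hξ]; exact ((cd1 hW₁ _).add (cd1 hW₂ _)).neg
  have hp' : ContDiff ℝ 1 p := by
    rw [hp]; exact contDiff_const.mul ((contDiff_const.mul htrε').add hξ')
  have hσxx' : ContDiff ℝ 1 σxx := by
    rw [hσxx]
    exact ((contDiff_const.mul htrε').add (contDiff_const.mul hεxx')).sub
      (contDiff_const.mul hp')
  have hσyy' : ContDiff ℝ 1 σyy := by
    rw [hσyy]
    exact ((contDiff_const.mul htrε').add (contDiff_const.mul hεyy')).sub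
      (contDiff_const.mul hp')
  have hσxy' : ContDiff ℝ 1 σxy := by rw [hσxy]; exact contDiff_const.mul hεxy'
  -- Schwarz (symmetry of second derivatives) identities
  have hTεxx : ∀ q, pT εxx q = pX v₁ q := by
    intro q; rw [hεxx, hv₁]; exact schwarz_XT hus₁ q
  have hTεyy : ∀ q, pT εyy q = pY v₂ q := by
    intro q; rw [hεyy, hv₂]; exact schwarz_YT hus₂ q
  have hTεxy : ∀ q, pT εxy q = (pY v₁ q + pX v₂ q) / 2 := by
    intro q
    rw [hεxy, hv₁, hv₂]
    have h1 : DifferentiableAt ℝ (pY us₁) q := (cd1 hus₁ (0,1,0)).differentiable one_ne_zero q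
    have h2 : DifferentiableAt ℝ (pX us₂) q := (cd1 hus₂ (1,0,0)).differentiable one_ne_zero q
    rw [pT_div_const (f := fun x => pY us₁ x + pX us₂ x) (h1.add h2) 2, pT_add h1 h2, schwarz_YT hus₁ q, schwarz_XT hus₂ q]
  have hTtrε : ∀ q, pT trε q = pX v₁ q + pY v₂ q := by
    intro q
    rw [htrε, pT_add (hεxx'.differentiable one_ne_zero q) (hεyy'.differentiable one_ne_zero q),
      hTεxx q, hTεyy q]
  have hTξ : ∀ q, pT ξ q = -(pX w₁ q + pY w₂ q) := by
    intro q
    have h1 : DifferentiableAt ℝ (pX W₁) q := (cd1 hW₁ (1,0,0)).differentiable one_ne_zero q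
    have h2 : DifferentiableAt ℝ (pY W₂) q := (cd1 hW₂ (0,1,0)).differentiable one_ne_zero q
    rw [hξ, pT_neg, pT_add h1 h2, schwarz_XT hW₁ q, schwarz_YT hW₂ q, ← hw₁, ← hw₂]
  have hTp : ∀ q, pT p q = m * (-β * (pX v₁ q + pY v₂ q) + -(pX w₁ q + pY w₂ q)) := by
    intro q
    rw [hp, pT_const_mul (f := fun x => -β * trε x + ξ x) m (((htrε'.differentiable one_ne_zero q).const_mul (-β)).add
      (hξ'.differentiable one_ne_zero q)),
      pT_add ((htrε'.differentiable one_ne_zero q).const_mul (-β)) (hξ'.differentiable one_ne_zero q),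
      pT_const_mul (-β) (htrε'.differentiable one_ne_zero q), hTtrε q, hTξ q]
  have hTp' : ∀ q, pT p q / m = -β * (pX v₁ q + pY v₂ q) + -(pX w₁ q + pY w₂ q) := by
    intro q; rw [hTp q, mul_div_cancel_left₀ _ (ne_of_gt hm)]

  -- vanishing of all fields outside K (spatially)
  set U : Set (ℝ×ℝ×ℝ) := {q | (q.1, q.2.1) ∉ K} with hUdef
  have hUopen : IsOpen U := by
    have hcm : Continuous fun q : ℝ×ℝ×ℝ => (q.1, q.2.1) := by fun_prop
    exact hK.isClosed.isOpen_compl.preimage hcm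
  have h0pd : ∀ f : ℝ×ℝ×ℝ → ℝ, (∀ q ∈ U, f q = 0) → ∀ v : ℝ×ℝ×ℝ, ∀ q ∈ U, fderiv ℝ f q v = 0 := by
    intro f hf v q hq
    rw [fderiv_zero_of_zero_on_open hUopen hq hf]
    rfl
  have h0us₁ : ∀ q ∈ U, us₁ q = 0 := fun q hq => (hsupp q.1 q.2.1 q.2.2 hq).1
  have h0us₂ : ∀ q ∈ U, us₂ q = 0 := fun q hq => (hsupp q.1 q.2.1 q.2.2 hq).2.1
  have h0W₁ : ∀ q ∈ U, W₁ q = 0 := fun q hq => (hsupp q.1 q.2.1 q.2.2 hq).2.2.1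
  have h0W₂ : ∀ q ∈ U, W₂ q = 0 := fun q hq => (hsupp q.1 q.2.1 q.2.2 hq).2.2.2
  have h0v₁ : ∀ q ∈ U, v₁ q = 0 := fun q hq => by rw [hv₁]; exact h0pd us₁ h0us₁ _ q hq
  have h0v₂ : ∀ q ∈ U, v₂ q = 0 := fun q hq => by rw [hv₂]; exact h0pd us₂ h0us₂ _ q hq
  have h0w₁ : ∀ q ∈ U, w₁ q = 0 := fun q hq => by rw [hw₁]; exact h0pd W₁ h0W₁ _ q hq
  have h0w₂ : ∀ q ∈ U, w₂ q = 0 := fun q hq => by rw [hw₂]; exact h0pd W₂ h0W₂ _ q hq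
  have h0εxx : ∀ q ∈ U, εxx q = 0 := fun q hq => by rw [hεxx]; exact h0pd us₁ h0us₁ _ q hq
  have h0εyy : ∀ q ∈ U, εyy q = 0 := fun q hq => by rw [hεyy]; exact h0pd us₂ h0us₂ _ q hq
  have h0εxy : ∀ q ∈ U, εxy q = 0 := fun q hq => by
    simp only [hεxy]
    rw [show pY us₁ q = 0 from h0pd us₁ h0us₁ _ q hq,
      show pX us₂ q = 0 from h0pd us₂ h0us₂ _ q hq]
    norm_num
  have h0trε : ∀ q ∈ U, trε q = 0 := fun q hq => by
    simp only [htrε]; rw [h0εxx q hq, h0εyy q hq]; ring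
  have h0ξ : ∀ q ∈ U, ξ q = 0 := fun q hq => by
    simp only [hξ]
    rw [show pX W₁ q = 0 from h0pd W₁ h0W₁ _ q hq,
      show pY W₂ q = 0 from h0pd W₂ h0W₂ _ q hq]
    norm_num
  have h0p : ∀ q ∈ U, p q = 0 := fun q hq => by
    simp only [hp]; rw [h0trε q hq, h0ξ q hq]; ring
  have h0σxx : ∀ q ∈ U, σxx q = 0 := fun q hq => by
    simp only [hσxx]; rw [h0trε q hq, h0εxx q hq, h0p q hq]; ring
  have h0σyy : ∀ q ∈ U, σyy q = 0 := fun q hq => by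
    simp only [hσyy]; rw [h0trε q hq, h0εyy q hq, h0p q hq]; ring
  have h0σxy : ∀ q ∈ U, σxy q = 0 := fun q hq => by
    simp only [hσxy]; rw [h0εxy q hq]; ring
  -- the flux fields
  set F : ℝ×ℝ×ℝ → ℝ := fun x => σxx x * v₁ x + σxy x * v₂ x - p x * w₁ x with hFdef
  set G : ℝ×ℝ×ℝ → ℝ := fun x => σxy x * v₁ x + σyy x * v₂ x - p x * w₂ x with hGdef
  have hF' : ContDiff ℝ 1 F := ((hσxx'.mul hv₁').add (hσxy'.mul hv₂')).sub (hp'.mul hw₁')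
  have hG' : ContDiff ℝ 1 G := ((hσxy'.mul hv₁').add (hσyy'.mul hv₂')).sub (hp'.mul hw₂')
  have h0F : ∀ q ∈ U, F q = 0 := fun q hq => by
    simp only [hFdef]; rw [h0σxx q hq, h0σxy q hq, h0p q hq]; ring
  have h0G : ∀ q ∈ U, G q = 0 := fun q hq => by
    simp only [hGdef]; rw [h0σxy q hq, h0σyy q hq, h0p q hq]; ring
  have hexp : ∀ q : ℝ×ℝ×ℝ, pX F q + pY G q =
      pX σxx q * v₁ q + σxx q * pX v₁ q + pX σxy q * v₂ q + σxy q * pX v₂ q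
        - (pX p q * w₁ q + p q * pX w₁ q)
      + (pY σxy q * v₁ q + σxy q * pY v₁ q + pY σyy q * v₂ q + σyy q * pY v₂ q
        - (pY p q * w₂ q + p q * pY w₂ q)) := by
    intro q
    have dσxx : DifferentiableAt ℝ σxx q := hσxx'.differentiable one_ne_zero q
    have dσyy : DifferentiableAt ℝ σyy q := hσyy'.differentiable one_ne_zero q
    have dσxy : DifferentiableAt ℝ σxy q := hσxy'.differentiable one_ne_zero q
    have dp : DifferentiableAt ℝ p q := hp'.differentiable one_ne_zero q
    have dv₁ : DifferentiableAt ℝ v₁ q := hv₁'.differentiable one_ne_zero q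
    have dv₂ : DifferentiableAt ℝ v₂ q := hv₂'.differentiable one_ne_zero q
    have dw₁ : DifferentiableAt ℝ w₁ q := hw₁'.differentiable one_ne_zero q
    have dw₂ : DifferentiableAt ℝ w₂ q := hw₂'.differentiable one_ne_zero q
    rw [hFdef, hGdef]
    rw [pX_sub (f := fun x => σxx x * v₁ x + σxy x * v₂ x) (g := fun x => p x * w₁ x) ((dσxx.mul dv₁).add (dσxy.mul dv₂)) (dp.mul dw₁),
        pX_add (f := fun x => σxx x * v₁ x) (g := fun x => σxy x * v₂ x) (dσxx.mul dv₁) (dσxy.mul dv₂), pX_mul dσxx dv₁, pX_mul dσxy dv₂, pX_mul dp dw₁,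
        pY_sub (f := fun x => σxy x * v₁ x + σyy x * v₂ x) (g := fun x => p x * w₂ x) ((dσxy.mul dv₁).add (dσyy.mul dv₂)) (dp.mul dw₂),
        pY_add (f := fun x => σxy x * v₁ x) (g := fun x => σyy x * v₂ x) (dσxy.mul dv₁) (dσyy.mul dv₂), pY_mul dσxy dv₁, pY_mul dσyy dv₂, pY_mul dp dw₂]
    ring
  have vσxx : ∀ q : ℝ×ℝ×ℝ, σxx q = lam0 * trε q + 2*μ*εxx q - β*p q := fun q => by rw [hσxx]
  have vσyy : ∀ q : ℝ×ℝ×ℝ, σyy q = lam0 * trε q + 2*μ*εyy q - β*p q := fun q => by rw [hσyy]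
  have vσxy : ∀ q : ℝ×ℝ×ℝ, σxy q = 2*μ*εxy q := fun q => by rw [hσxy]
  -- the θ-integral identity
  have hθint : ∀ s : ℝ×ℝ,
      (∫ θ in Set.Ioi (0:ℝ),
        c θ * ((w₁ (s.1, s.2, t) - ψ₁ s θ t) * (pT w₁ (s.1, s.2, t) - deriv (ψ₁ s θ) t)
          + (w₂ (s.1, s.2, t) - ψ₂ s θ t) * (pT w₂ (s.1, s.2, t) - deriv (ψ₂ s θ) t)))
      = (η / κ) * (1 / Real.sqrt Ω) * (1 / π) *
          (w₁ (s.1, s.2, t) * (∫ θ in Set.Ioi (0:ℝ), θ ^ (-(1/2:ℝ)) * ψ₁ s θ t)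
           + w₂ (s.1, s.2, t) * (∫ θ in Set.Ioi (0:ℝ), θ ^ (-(1/2:ℝ)) * ψ₂ s θ t))
        - ∫ θ in Set.Ioi (0:ℝ), c θ * (Ω * (w₁ (s.1, s.2, t)^2 + w₂ (s.1, s.2, t)^2)
            + (θ+Ω) * (ψ₁ s θ t^2 + ψ₂ s θ t^2)) := by
    intro s
    have hint1 : IntegrableOn (fun θ : ℝ => (η / κ) * (1 / Real.sqrt Ω) * (1 / π) *
        (w₁ (s.1, s.2, t) * (θ ^ (-(1/2:ℝ)) * ψ₁ s θ t)
          + w₂ (s.1, s.2, t) * (θ ^ (-(1/2:ℝ)) * ψ₂ s θ t)))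
        (Set.Ioi 0) volume :=
      (((hintψ s t).1.const_mul _).add ((hintψ s t).2.const_mul _)).const_mul _
    have hEqOn : Set.EqOn
        (fun θ => c θ * ((w₁ (s.1, s.2, t) - ψ₁ s θ t) * (pT w₁ (s.1, s.2, t) - deriv (ψ₁ s θ) t)
          + (w₂ (s.1, s.2, t) - ψ₂ s θ t) * (pT w₂ (s.1, s.2, t) - deriv (ψ₂ s θ) t)))
        (fun θ => (η / κ) * (1 / Real.sqrt Ω) * (1 / π) *
          (w₁ (s.1, s.2, t) * (θ ^ (-(1/2:ℝ)) * ψ₁ s θ t)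
            + w₂ (s.1, s.2, t) * (θ ^ (-(1/2:ℝ)) * ψ₂ s θ t))
          - c θ * (Ω * (w₁ (s.1, s.2, t)^2 + w₂ (s.1, s.2, t)^2)
            + (θ+Ω) * (ψ₁ s θ t^2 + ψ₂ s θ t^2)))
        (Set.Ioi 0) := by
      intro θ hθ
      beta_reduce
      have hθ0 : (0:ℝ) < θ := hθ
      have hd1 : deriv (ψ₁ s θ) t
          = -(θ+Ω) * ψ₁ s θ t + pT w₁ (s.1, s.2, t) + Ω * w₁ (s.1, s.2, t) :=
        (hode₁ s θ t hθ0).deriv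
      have hd2 : deriv (ψ₂ s θ) t
          = -(θ+Ω) * ψ₂ s θ t + pT w₂ (s.1, s.2, t) + Ω * w₂ (s.1, s.2, t) :=
        (hode₂ s θ t hθ0).deriv
      rw [hd1, hd2]
      simp only [hc]
      have hpow : θ ^ (-(1/2:ℝ)) = (Real.sqrt θ)⁻¹ := by
        rw [Real.rpow_neg hθ0.le, Real.sqrt_eq_rpow]
      rw [hpow, Real.sqrt_mul hΩ.le]
      have h1 : Real.sqrt θ ≠ 0 := ne_of_gt (Real.sqrt_pos.mpr hθ0)
      have h2 : Real.sqrt Ω ≠ 0 := ne_of_gt (Real.sqrt_pos.mpr hΩ)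
      have h3 : θ + 2*Ω ≠ 0 := ne_of_gt (by linarith)
      have h4 : (π:ℝ) ≠ 0 := Real.pi_ne_zero
      have h5 : κ ≠ 0 := ne_of_gt hκ
      field_simp
      ring
    rw [setIntegral_congr_fun measurableSet_Ioi hEqOn,
      integral_sub hint1 (hintD s t), integral_const_mul,
      integral_add ((hintψ s t).1.const_mul _) ((hintψ s t).2.const_mul _),
      integral_const_mul, integral_const_mul]
  -- divergence theorem in space, at time t
  set L : (ℝ×ℝ) →L[ℝ] ℝ×ℝ×ℝ := (ContinuousLinearMap.fst ℝ ℝ ℝ).prod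
      ((ContinuousLinearMap.snd ℝ ℝ ℝ).prod 0) with hLdef
  have hL1 : L ((1:ℝ),(0:ℝ)) = ((1:ℝ),(0:ℝ),(0:ℝ)) := by
    simp [hLdef, ContinuousLinearMap.prod_apply]
  have hL2 : L ((0:ℝ),(1:ℝ)) = ((0:ℝ),(1:ℝ),(0:ℝ)) := by
    simp [hLdef, ContinuousLinearMap.prod_apply]
  have hemb : ∀ z : ℝ×ℝ, HasFDerivAt (fun z : ℝ×ℝ => ((z.1, z.2, t) : ℝ×ℝ×ℝ)) L z :=
    fun z => HasFDerivAt.prodMk hasFDerivAt_fst (HasFDerivAt.prodMk hasFDerivAt_snd (hasFDerivAt_const t z))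
  have hFdiffAt : ∀ z : ℝ×ℝ, HasFDerivAt (fun z : ℝ×ℝ => F (z.1, z.2, t))
      ((fderiv ℝ F (z.1, z.2, t)).comp L) z :=
    fun z => ((hF'.differentiable one_ne_zero _).hasFDerivAt).comp z (hemb z)
  have hGdiffAt : ∀ z : ℝ×ℝ, HasFDerivAt (fun z : ℝ×ℝ => G (z.1, z.2, t))
      ((fderiv ℝ G (z.1, z.2, t)).comp L) z :=
    fun z => ((hG'.differentiable one_ne_zero _).hasFDerivAt).comp z (hemb z)
  have hset1 : ∀ z : ℝ×ℝ, ((fderiv ℝ F (z.1, z.2, t)).comp L) (1,0) = pX F (z.1, z.2, t) := by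
    intro z; rw [ContinuousLinearMap.comp_apply, hL1]; rfl
  have hset2 : ∀ z : ℝ×ℝ, ((fderiv ℝ G (z.1, z.2, t)).comp L) (0,1) = pY G (z.1, z.2, t) := by
    intro z; rw [ContinuousLinearMap.comp_apply, hL2]; rfl
  have hcontdiv : Continuous fun z : ℝ×ℝ => pX F (z.1, z.2, t) + pY G (z.1, z.2, t) := by
    have hcX : Continuous (pX F) :=
      (hF'.continuous_fderiv_apply one_ne_zero).comp (continuous_id.prodMk continuous_const)
    have hcY : Continuous (pY G) :=
      (hG'.continuous_fderiv_apply one_ne_zero).comp (continuous_id.prodMk continuous_const)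
    have hce : Continuous fun z : ℝ×ℝ => ((z.1, z.2, t) : ℝ×ℝ×ℝ) := by fun_prop
    exact (hcX.comp hce).add (hcY.comp hce)
  have hmemU : ∀ z : ℝ×ℝ, z ∉ K → ((z.1, z.2, t) : ℝ×ℝ×ℝ) ∈ U := by
    intro z hz
    simp only [hUdef, Set.mem_setOf_eq]
    exact hz
  have hdiv0 : (∫ z : ℝ×ℝ, (pX F (z.1, z.2, t) + pY G (z.1, z.2, t))) = 0 := by
    have heq : (fun z : ℝ×ℝ => (((fderiv ℝ F (z.1, z.2, t)).comp L) (1,0)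
        + ((fderiv ℝ G (z.1, z.2, t)).comp L) (0,1)))
        = fun z : ℝ×ℝ => pX F (z.1, z.2, t) + pY G (z.1, z.2, t) := by
      funext z; rw [hset1 z, hset2 z]
    have hres := div_integral_zero (fun z => F (z.1, z.2, t)) (fun z => G (z.1, z.2, t))
      (fun z => (fderiv ℝ F (z.1, z.2, t)).comp L) (fun z => (fderiv ℝ G (z.1, z.2, t)).comp L)
      hFdiffAt hGdiffAt (heq ▸ hcontdiv) K hK
      (fun z hz => h0F _ (hmemU z hz)) (fun z hz => h0G _ (hmemU z hz))
    rwa [heq] at hres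
  have hdivint : Integrable (fun z : ℝ×ℝ => pX F (z.1, z.2, t) + pY G (z.1, z.2, t)) := by
    apply hcontdiv.integrable_of_hasCompactSupport
    apply HasCompactSupport.intro hK
    intro z hz
    have h1 : pX F (z.1, z.2, t) = 0 := h0pd F h0F _ _ (hmemU z hz)
    have h2 : pY G (z.1, z.2, t) = 0 := h0pd G h0G _ _ (hmemU z hz)
    rw [h1, h2, add_zero]
  -- pointwise identity of the integrands
  have hIeq : (fun s : ℝ×ℝ =>
      ((ρ * (v₁ (s.1, s.2, t) * pT v₁ (s.1, s.2, t) + v₂ (s.1, s.2, t) * pT v₂ (s.1, s.2, t))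
        + ρw * (w₁ (s.1, s.2, t) * pT w₁ (s.1, s.2, t) + w₂ (s.1, s.2, t) * pT w₂ (s.1, s.2, t))
        + ρf * (pT v₁ (s.1, s.2, t) * w₁ (s.1, s.2, t) + v₁ (s.1, s.2, t) * pT w₁ (s.1, s.2, t)
          + pT v₂ (s.1, s.2, t) * w₂ (s.1, s.2, t) + v₂ (s.1, s.2, t) * pT w₂ (s.1, s.2, t)))
      + (lam0 * trε (s.1, s.2, t) * pT trε (s.1, s.2, t)
        + 2 * μ * (εxx (s.1, s.2, t) * pT εxx (s.1, s.2, t)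
          + 2 * εxy (s.1, s.2, t) * pT εxy (s.1, s.2, t)
          + εyy (s.1, s.2, t) * pT εyy (s.1, s.2, t))
        + p (s.1, s.2, t) * pT p (s.1, s.2, t) / m)
      + ∫ θ in Set.Ioi (0 : ℝ),
          c θ * ((w₁ (s.1, s.2, t) - ψ₁ s θ t) * (pT w₁ (s.1, s.2, t) - deriv (ψ₁ s θ) t)
            + (w₂ (s.1, s.2, t) - ψ₂ s θ t) * (pT w₂ (s.1, s.2, t) - deriv (ψ₂ s θ) t))))
      = fun s : ℝ×ℝ =>
      (pX F (s.1, s.2, t) + pY G (s.1, s.2, t)) -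
      ∫ θ in Set.Ioi (0:ℝ), c θ * (Ω * (w₁ (s.1, s.2, t)^2 + w₂ (s.1, s.2, t)^2)
        + (θ+Ω) * (ψ₁ s θ t^2 + ψ₂ s θ t^2)) := by
    funext s
    rw [hθint s, hexp (s.1, s.2, t), hTtrε (s.1, s.2, t), hTεxx (s.1, s.2, t),
      hTεxy (s.1, s.2, t), hTεyy (s.1, s.2, t), mul_div_assoc, hTp' (s.1, s.2, t),
      vσxx (s.1, s.2, t), vσyy (s.1, s.2, t), vσxy (s.1, s.2, t)]
    linear_combination v₁ (s.1, s.2, t) * hmom1x (s.1, s.2, t)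
      + v₂ (s.1, s.2, t) * hmom1y (s.1, s.2, t)
      + w₁ (s.1, s.2, t) * hmom2x s t + w₂ (s.1, s.2, t) * hmom2y s t
  -- conclusion
  have h := hswap t
  rw [hIeq] at h
  have hval2 : (∫ s : ℝ×ℝ, ((pX F (s.1, s.2, t) + pY G (s.1, s.2, t)) -
      ∫ θ in Set.Ioi (0:ℝ), c θ * (Ω * (w₁ (s.1, s.2, t)^2 + w₂ (s.1, s.2, t)^2)
        + (θ+Ω) * (ψ₁ s θ t^2 + ψ₂ s θ t^2)))) = -(D t) := by
    simp only [hD]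
    by_cases hInt : Integrable (fun s : ℝ×ℝ => ∫ θ in Set.Ioi (0:ℝ),
        c θ * (Ω * (w₁ (s.1, s.2, t)^2 + w₂ (s.1, s.2, t)^2)
          + (θ+Ω) * (ψ₁ s θ t^2 + ψ₂ s θ t^2))) volume
    · rw [integral_sub hdivint hInt, hdiv0, zero_sub]
    · have hcon : ¬ Integrable (fun s : ℝ×ℝ => (pX F (s.1, s.2, t) + pY G (s.1, s.2, t)) -
          ∫ θ in Set.Ioi (0:ℝ), c θ * (Ω * (w₁ (s.1, s.2, t)^2 + w₂ (s.1, s.2, t)^2)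
            + (θ+Ω) * (ψ₁ s θ t^2 + ψ₂ s θ t^2))) volume := by
        intro hI
        have h2 : Integrable (fun s : ℝ×ℝ => (pX F (s.1, s.2, t) + pY G (s.1, s.2, t)) -
            ((pX F (s.1, s.2, t) + pY G (s.1, s.2, t)) -
              ∫ θ in Set.Ioi (0:ℝ), c θ * (Ω * (w₁ (s.1, s.2, t)^2 + w₂ (s.1, s.2, t)^2)
                + (θ+Ω) * (ψ₁ s θ t^2 + ψ₂ s θ t^2)))) volume := hdivint.sub hI
        exact hInt (by simpa using h2)
      rw [integral_undef hcon, integral_undef hInt, neg_zero]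
  rw [hval2] at h
  exact h
end
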